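/- arXiv:2508.03778 — 2 statements merged into one kernel-verified Lean document; each statement's English description precedes it below -/
import Mathlib

section
/- Let n ≥ 16 and let H be a balanced bipartite graph with parts X = {u_1,…,u_n} and Y = {v_1,…,v_n} such that u_i is adjacent to v_j for all 1 ≤ i ≤ n and 4 ≤ j ≤ n, and such that d_H(v_i) ≤ 3 for i = 1, 2, 3. If the bipartite toughness of H satisfies t^B(H) ≥ 1 and H contains no Hamilton cycle, then d_H(v_i) = 2 for each i = 1, 2, 3. -/
open SimpleGraph

/-- The number of connected components of `G - S`. -/
noncomputable def numComp {V : Type*} (G : SimpleGraph V) (S : Set V) : ℕ :=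
  Nat.card (SimpleGraph.ConnectedComponent (SimpleGraph.induce Sᶜ G))

/-- `X, Y` form a bipartition of the graph `G`. -/
def IsBipartition {V : Type*} (G : SimpleGraph V) (X Y : Set V) : Prop :=
  X ∪ Y = Set.univ ∧ Disjoint X Y ∧
    ∀ ⦃u v⦄, G.Adj u v → (u ∈ X ∧ v ∈ Y) ∨ (u ∈ Y ∧ v ∈ X)

/-- The bipartite toughness of `G` (with parts `X`, `Y`) is at least `1`:
`c(G - S) ≤ |S|` for every proper subset `S ⊂ X` (or `S ⊂ Y`) with `c(G - S) > 1`. -/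
def BTough1 {V : Type*} (G : SimpleGraph V) (X Y : Set V) : Prop :=
  ∀ S : Set V, (S ⊂ X ∨ S ⊂ Y) → 1 < numComp G S → numComp G S ≤ S.ncard

/-- The toughness of a (non-complete) graph `G`. -/
noncomputable def toughness {V : Type*} (G : SimpleGraph V) : ℝ :=
  sInf {x : ℝ | ∃ S : Set V, 1 < numComp G S ∧ x = (S.ncard : ℝ) / (numComp G S : ℝ)}

/-- The spectral radius of `G`: the largest eigenvalue of its adjacency matrix. -/
noncomputable def specRad {V : Type*} [Fintype V] (G : SimpleGraph V) : ℝ :=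
  letI := Classical.decRel G.Adj
  sSup {μ : ℝ | Module.End.HasEigenvalue (Matrix.mulVecLin (G.adjMatrix ℝ)) μ}

/-- `G` has a 2-factor: a spanning subgraph in which every vertex has degree 2. -/
def Has2Factor {V : Type*} (G : SimpleGraph V) : Prop :=
  ∃ F : SimpleGraph V, F ≤ G ∧ ∀ v, (F.neighborSet v).ncard = 2

/-- The graph `G_{n,n}`: parts `X = {u_1,…,u_n}` (left) and `Y = {v_1,…,v_n}` (right);
`u_i ~ v_j` for all `i` and all `j ≥ 4`; moreover `v_1, v_2, v_3` are joined to `u_1`,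
and `v_i` is joined to `u_{i+1}` for `1 ≤ i ≤ 3` (indices here are 0-based). -/
def Gnn (n : ℕ) : SimpleGraph (Fin n ⊕ Fin n) :=
  SimpleGraph.fromRel fun a b =>
    match a, b with
    | Sum.inl i, Sum.inr j =>
        3 ≤ (j : ℕ) ∨ ((j : ℕ) < 3 ∧ ((i : ℕ) = 0 ∨ (i : ℕ) = (j : ℕ) + 1))
    | _, _ => False

/-- The graph `M_n`: the complete graph on `{v_1,…,v_{n-3}}` (the vertices of index `< n-3`),
together with three vertices `u_1, u_2, u_3` (the vertices of index `≥ n-3`), each joined to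
`v_1` (index `0`), and `u_i` joined to `v_{i+1}` for `1 ≤ i ≤ 3`. -/
def Mn (n : ℕ) : SimpleGraph (Fin n) :=
  SimpleGraph.fromRel fun a b =>
    ((a : ℕ) < n - 3 ∧ (b : ℕ) < n - 3) ∨
      (n - 3 ≤ (a : ℕ) ∧ ((b : ℕ) = 0 ∨ (b : ℕ) = (a : ℕ) - (n - 3) + 1))

section Aux

open List
open scoped Classical

variable {V : Type*}

lemma exists_walk_of_chain (G : SimpleGraph V) :
    ∀ (M : List V) (a b : V), M.Chain' G.Adj → M.head? = some a → M.getLast? = some b →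
      ∃ w : G.Walk a b, w.support = M := by
  intro M
  induction M with
  | nil => intro a b _ h; simp at h
  | cons x t ih =>
    intro a b hc hh hl
    simp at hh; subst hh
    cases t with
    | nil =>
      simp at hl; subst hl
      exact ⟨Walk.nil, rfl⟩
    | cons y t' =>
      simp only [List.Chain', List.isChain_cons_cons] at hc
      have hl' : (y :: t').getLast? = some b := by
        rw [← hl]; symm; exact List.getLast?_cons_cons ..
      obtain ⟨w', hw'⟩ := ih y b hc.2 rfl hl'
      exact ⟨Walk.cons hc.1 w', by simp [hw']⟩

lemma ham_of_lists {n : ℕ} (hn : 3 ≤ n) (H : SimpleGraph (Fin n ⊕ Fin n))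
    (us vs : List (Fin n)) (hus : us.Perm (List.finRange n)) (hvs : vs.Perm (List.finRange n))
    (d : Fin n)
    (hadj : ∀ i, i < n → H.Adj (.inl (us.getD i d)) (.inr (vs.getD i d)) ∧
        H.Adj (.inl (us.getD ((i+1) % n) d)) (.inr (vs.getD i d))) :
    H.IsHamiltonian := by
  have hkl : us.length = n := by rw [hus.length_eq, List.length_finRange]
  have hvl : vs.length = n := by rw [hvs.length_eq, List.length_finRange]
  have husnd : us.Nodup := hus.nodup_iff.2 (List.nodup_finRange n)
  have hvsnd : vs.Nodup := hvs.nodup_iff.2 (List.nodup_finRange n)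
  set f : ℕ → (Fin n ⊕ Fin n) := fun i =>
    if i % 2 = 0 then Sum.inl (us.getD (i/2) d) else Sum.inr (vs.getD (i/2) d) with hf
  have feven : ∀ k, k < n → f (2*k) = Sum.inl (us.getD k d) := by
    intro k hk
    simp only [hf]
    rw [if_pos (by omega), show 2*k/2 = k by omega]
  have fodd : ∀ k, k < n → f (2*k+1) = Sum.inr (vs.getD k d) := by
    intro k hk
    simp only [hf]
    rw [if_neg (by omega), show (2*k+1)/2 = k by omega]
  -- injectivity of f on [0, 2n)
  have finj : ∀ i j, i < 2*n → j < 2*n → f i = f j → i = j := by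
    intro i j hi hj hij
    rcases Nat.even_or_odd i with ⟨k, hk⟩ | ⟨k, hk⟩ <;>
      rcases Nat.even_or_odd j with ⟨l, hl⟩ | ⟨l, hl⟩ <;> subst hk hl
    · rw [show k + k = 2*k by omega, show l + l = 2*l by omega,
        feven k (by omega), feven l (by omega),
        List.getD_eq_getElem us d (show k < us.length by omega),
        List.getD_eq_getElem us d (show l < us.length by omega)] at hij
      simp only [Sum.inl.injEq] at hij
      have := (husnd.getElem_inj_iff).1 hij
      omega
    · rw [show k + k = 2*k by omega, feven k (by omega), fodd l (by omega)] at hij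
      simp at hij
    · rw [show l + l = 2*l by omega, fodd k (by omega), feven l (by omega)] at hij
      simp at hij
    · rw [fodd k (by omega), fodd l (by omega),
        List.getD_eq_getElem vs d (show k < vs.length by omega),
        List.getD_eq_getElem vs d (show l < vs.length by omega)] at hij
      simp only [Sum.inr.injEq] at hij
      have := (hvsnd.getElem_inj_iff).1 hij
      omega
  -- the step adjacency
  have hstep : ∀ j, j + 1 < 2*n → H.Adj (f j) (f (j+1)) := by
    intro j hj
    rcases Nat.even_or_odd j with ⟨k, hk⟩ | ⟨k, hk⟩ <;> subst hk
    · rw [show k + k = 2*k by omega, show 2*k+1 = 2*k+1 by rfl, feven k (by omega),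
        fodd k (by omega)]
      exact (hadj k (by omega)).1
    · rw [show 2*k+1+1 = 2*(k+1) by omega, fodd k (by omega), feven (k+1) (by omega)]
      have := (hadj k (by omega)).2
      rw [Nat.mod_eq_of_lt (by omega)] at this
      exact this.symm
  set a : Fin n ⊕ Fin n := Sum.inl (us.getD 0 d) with ha
  have hfa : f 0 = a := by
    rw [show (0:ℕ) = 2*0 by omega, feven 0 (by omega)]
  have hlaststep : H.Adj (f (2*n - 1)) a := by
    rw [show 2*n - 1 = 2*(n-1)+1 by omega, fodd (n-1) (by omega), ha]
    have := (hadj (n-1) (by omega)).2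
    rw [show n - 1 + 1 = n by omega, Nat.mod_self] at this
    exact this.symm
  set T : List (Fin n ⊕ Fin n) := (List.range (2*n - 1)).map (fun i => f (i+1)) with hT
  have hTlen : T.length = 2*n - 1 := by simp [hT]
  have hTget : ∀ (i : ℕ) (h : i < T.length), T[i] = f (i+1) := by
    intro i h
    simp [hT]
  have hTnd : T.Nodup := by
    rw [List.nodup_iff_injective_get]
    intro ⟨i, hi⟩ ⟨j, hj⟩ hij
    simp only [List.get_eq_getElem, hTget i hi, hTget j hj] at hij
    have := finj (i+1) (j+1) (by omega) (by omega) hij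
    simp; omega
  have haT : a ∉ T := by
    intro hmem
    rw [List.mem_iff_getElem] at hmem
    obtain ⟨i, hi, hgi⟩ := hmem
    rw [hTget i hi, ← hfa] at hgi
    have := finj (i+1) 0 (by omega) (by omega) hgi
    omega
  have hM₁len : (T ++ [a]).length = 2*n := by simp [hTlen]; omega
  have hM₁nd : (T ++ [a]).Nodup := by
    rw [List.nodup_append]
    exact ⟨hTnd, List.nodup_singleton a,
      by intro y hy z hz hyz; simp at hz; subst hz; subst hyz; exact haT hy⟩
  have hchain : (T ++ [a]).Chain' H.Adj := by
    show List.IsChain _ _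
    rw [List.isChain_iff_getElem]
    intro i hilen
    rw [hM₁len] at hilen
    rcases Nat.lt_or_ge (i+1) (2*n - 1) with h | h
    · rw [List.getElem_append_left (show i < T.length by omega),
        List.getElem_append_left (show i + 1 < T.length by omega),
        hTget i (by omega), hTget (i+1) (by omega)]
      exact hstep (i+1) (by omega)
    · have hieq : i + 1 = 2*n - 1 := by omega
      rw [List.getElem_append_left (show i < T.length by omega),
        List.getElem_append_right (show T.length ≤ i + 1 by omega),
        hTget i (by omega), List.getElem_singleton, show i + 1 = 2*n-1 from hieq]
      exact hlaststep
  have hne : T ++ [a] ≠ [] := by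
    intro h
    rw [h] at hM₁len
    simp at hM₁len; omega
  have hhead : (T ++ [a]).head? = some (f 1) := by
    rw [List.head?_eq_head hne, List.head_eq_getElem,
      List.getElem_append_left (show 0 < T.length by omega), hTget 0 (by omega)]
  have hlast : (T ++ [a]).getLast? = some a := List.getLast?_concat
  obtain ⟨w₁, hw₁⟩ := exists_walk_of_chain H (T ++ [a]) (f 1) a hchain hhead hlast
  have hadj0 : H.Adj a (f 1) := by rw [← hfa]; exact hstep 0 (by omega)
  set w : H.Walk a a := Walk.cons hadj0 w₁ with hw
  have hpath : w₁.IsPath := Walk.IsPath.mk' (by rw [hw₁]; exact hM₁nd)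
  -- list-level identities for darts
  have lfst : List.map (fun x => x.toProd.1) w₁.darts = T := by
    rw [Walk.map_fst_darts, hw₁, List.dropLast_concat]
  have lsnd : List.map (fun x => x.toProd.2) w₁.darts = (T ++ [a]).tail := by
    rw [Walk.map_snd_darts, hw₁]
  have hdl : w₁.darts.length = 2*n - 1 := by
    have := congrArg List.length lfst
    simp only [List.length_map] at this
    omega
  have hedge : s(a, f 1) ∉ w₁.edges := by
    intro hmem
    rw [Walk.edges, List.mem_map] at hmem
    obtain ⟨dd, hdmem, hde⟩ := hmem
    have hde' : s(dd.toProd.1, dd.toProd.2) = s(a, f 1) := hde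
    rw [Sym2.eq_iff] at hde'
    obtain ⟨i, hilt, hieq⟩ := List.mem_iff_getElem.1 hdmem
    have hfsti : dd.toProd.1 = T[i]'(by omega) := by
      rw [← List.getElem_of_eq lfst (by simp [hdl]; omega), List.getElem_map, hieq]
    have hsndi : dd.toProd.2 = (T ++ [a])[i+1]'(by omega) := by
      rw [← List.getElem_tail (l := T ++ [a]) (i := i) (by simp [hTlen]; omega),
        ← List.getElem_of_eq lsnd (by simp [hdl]; omega), List.getElem_map, hieq]
    rcases hde' with ⟨h1, h2⟩ | ⟨h1, h2⟩
    · rw [h1] at hfsti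
      exact haT (by rw [hfsti]; exact List.getElem_mem _)
    · -- dd.fst = f 1, dd.snd = a
      rw [h1, hTget i (by omega)] at hfsti
      have hi0 : i + 1 = 0 + 1 := finj (i+1) (0+1) (by omega) (by omega) hfsti.symm
      have hi0' : i = 0 := by omega
      subst hi0'
      rw [h2, List.getElem_append_left (show 0 + 1 < T.length by omega),
        hTget (0+1) (by omega), ← hfa] at hsndi
      have := finj 0 (0+1+1) (by omega) (by omega) hsndi
      omega
  have hcyc : w.IsCycle := (Walk.cons_isCycle_iff w₁ hadj0).2 ⟨hpath, hedge⟩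
  have hmemall : ∀ x : Fin n ⊕ Fin n, x ∈ T ++ [a] := by
    intro x
    rcases x with u | v
    · have : u ∈ us := hus.mem_iff.2 (List.mem_finRange u)
      obtain ⟨k, hk, hku⟩ := List.mem_iff_getElem.1 this
      have hfk : f (2*k) = Sum.inl u := by
        rw [feven k (by omega), List.getD_eq_getElem us d (by omega), hku]
      rcases Nat.eq_zero_or_pos k with rfl | hkpos
      · have : a = Sum.inl u := by rw [← hfa, show (0:ℕ) = 2*0 by omega]; exact hfk
        exact List.mem_append_right _ (by simp [← this])
      · apply List.mem_append_left
        have : T[2*k - 1]'(by omega) = Sum.inl u := by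
          rw [hTget _ (by omega), show 2*k - 1 + 1 = 2*k by omega, hfk]
        rw [← this]
        exact List.getElem_mem _
    · have : v ∈ vs := hvs.mem_iff.2 (List.mem_finRange v)
      obtain ⟨k, hk, hkv⟩ := List.mem_iff_getElem.1 this
      apply List.mem_append_left
      have : T[2*k]'(by omega) = Sum.inr v := by
        rw [hTget _ (by omega), fodd k (by omega), List.getD_eq_getElem vs d (by omega), hkv]
      rw [← this]
      exact List.getElem_mem _
  have hham : w.IsHamiltonianCycle := by
    rw [Walk.isHamiltonianCycle_iff_isCycle_and_support_count_tail_eq_one]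
    refine ⟨hcyc, fun x => ?_⟩
    have hsup : w.support = a :: (T ++ [a]) := by rw [hw, Walk.support_cons, hw₁]
    rw [hsup]
    simp only [List.tail_cons]
    exact @List.count_eq_one_of_mem _ instBEqOfDecidableEq _ _ _ hM₁nd (hmemall x)
  intro _
  exact ⟨a, w, hham⟩

lemma perm_fill {n : ℕ} (l0 : List (Fin n)) (h : l0.Nodup) :
    (l0 ++ (List.finRange n).filter (fun x => x ∉ l0)).Perm (List.finRange n) := by
  rw [List.perm_iff_count]
  intro x
  rw [List.count_append]
  have hfr : List.count x (List.finRange n) = 1 :=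
    List.count_eq_one_of_mem (List.nodup_finRange n) (List.mem_finRange x)
  by_cases hx : x ∈ l0
  · have h1 : List.count x l0 = 1 := List.count_eq_one_of_mem h hx
    have h2 : List.count x ((List.finRange n).filter (fun x => x ∉ l0)) = 0 := by
      rw [List.count_eq_zero]
      intro hmem
      have := List.of_mem_filter hmem
      simp at this
      exact this hx
    omega
  · have h1 : List.count x l0 = 0 := List.count_eq_zero.2 hx
    have h2 : List.count x ((List.finRange n).filter (fun x => x ∉ l0)) = 1 := by
      rw [List.count_filter (by simp [hx]), hfr]
    omega

lemma assemble {n : ℕ} (hn : 16 ≤ n) (H : SimpleGraph (Fin n ⊕ Fin n))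
    (hcomp : ∀ i j : Fin n, 3 ≤ (j : ℕ) → H.Adj (Sum.inl i) (Sum.inr j))
    (l : List (Fin n)) (hnd : l.Nodup) (hlen : l.length ≤ 6)
    (jA jB jC : Fin n) (hjA : (jA:ℕ) < 3) (hjB : (jB:ℕ) < 3) (hjC : (jC:ℕ) < 3)
    (hAB : jA ≠ jB) (hAC : jA ≠ jC) (hBC : jB ≠ jC)
    (p q r : ℕ) (hp : p + 1 < l.length) (hq : q + 1 < l.length) (hr : r + 1 < l.length)
    (hpq : p ≠ q) (hpr : p ≠ r) (hqr : q ≠ r)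
    (d : Fin n)
    (hadjA : H.Adj (.inl (l.getD p d)) (.inr jA) ∧ H.Adj (.inl (l.getD (p+1) d)) (.inr jA))
    (hadjB : H.Adj (.inl (l.getD q d)) (.inr jB) ∧ H.Adj (.inl (l.getD (q+1) d)) (.inr jB))
    (hadjC : H.Adj (.inl (l.getD r d)) (.inr jC) ∧ H.Adj (.inl (l.getD (r+1) d)) (.inr jC)) :
    H.IsHamiltonian := by
  set g : ℕ → Fin n := fun i =>
    if i = p then jA else if i = q then jB else if i = r then jC
    else if h : i + 3 < n then ⟨i+3, h⟩ else d with hg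
  have hgp : g p = jA := by simp [hg]
  have hgq : g q = jB := by simp [hg, hpq.symm]
  have hgr : g r = jC := by
    simp only [hg]
    rw [if_neg (Ne.symm hpr), if_neg (Ne.symm hqr)]
    simp
  have hgval : ∀ i, i < l.length → i ≠ p → i ≠ q → i ≠ r → (g i : ℕ) = i + 3 := by
    intro i hi h1 h2 h3
    simp only [hg]
    rw [if_neg h1, if_neg h2, if_neg h3, dif_pos (by omega)]
  have g1 : (jA:ℕ) ≠ (jB:ℕ) := fun h => hAB (Fin.ext h)
  have g2 : (jA:ℕ) ≠ (jC:ℕ) := fun h => hAC (Fin.ext h)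
  have g3 : (jB:ℕ) ≠ (jC:ℕ) := fun h => hBC (Fin.ext h)
  have key : ∀ i, i < l.length → ((g i : ℕ) = (jA:ℕ) ∧ i = p) ∨ ((g i:ℕ) = (jB:ℕ) ∧ i = q) ∨
      ((g i:ℕ) = (jC:ℕ) ∧ i = r) ∨ ((g i:ℕ) = i + 3 ∧ i ≠ p ∧ i ≠ q ∧ i ≠ r) := by
    intro i hi
    by_cases h1 : i = p
    · subst h1; rw [hgp]; tauto
    by_cases h2 : i = q
    · subst h2; rw [hgq]; tauto
    by_cases h3 : i = r
    · subst h3; rw [hgr]; tauto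
    right; right; right
    exact ⟨hgval i hi h1 h2 h3, h1, h2, h3⟩
  have hginj : ∀ i j, i < l.length → j < l.length → g i = g j → i = j := by
    intro i j hi hj hij
    have hv : (g i : ℕ) = (g j : ℕ) := by rw [hij]
    have ki := key i hi
    have kj := key j hj
    rcases ki with ⟨e1,e2⟩|⟨e1,e2⟩|⟨e1,e2⟩|⟨e1,e2,e3,e4⟩ <;>
      rcases kj with ⟨f1,f2⟩|⟨f1,f2⟩|⟨f1,f2⟩|⟨f1,f2,f3,f4⟩ <;> omega
  set vm : List (Fin n) := (List.range l.length).map g with hvm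
  have hvmlen : vm.length = l.length := by simp [hvm]
  have hvmget : ∀ i, i < l.length → vm.getD i d = g i := by
    intro i hi
    rw [List.getD_eq_getElem vm d (by omega)]
    simp [hvm]
  have hvmnd : vm.Nodup := by
    rw [List.nodup_iff_injective_get]
    intro ⟨i, hi⟩ ⟨j, hj⟩ hij
    rw [hvmlen] at hi hj
    simp only [List.get_eq_getElem, hvm, List.getElem_map, List.getElem_range] at hij
    have := hginj i j hi hj hij
    simp [this]
  have hmemA : jA ∈ vm := by
    rw [← hgp, hvm]
    exact List.mem_map_of_mem (f := g) (by simp; omega)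
  have hmemB : jB ∈ vm := by
    rw [← hgq, hvm]
    exact List.mem_map_of_mem (f := g) (by simp; omega)
  have hmemC : jC ∈ vm := by
    rw [← hgr, hvm]
    exact List.mem_map_of_mem (f := g) (by simp; omega)
  set us : List (Fin n) := l ++ (List.finRange n).filter (fun x => x ∉ l) with hus
  set vs : List (Fin n) := vm ++ (List.finRange n).filter (fun x => x ∉ vm) with hvs
  have hpus : us.Perm (List.finRange n) := perm_fill l hnd
  have hpvs : vs.Perm (List.finRange n) := perm_fill vm hvmnd
  have huslen : us.length = n := by rw [hpus.length_eq, List.length_finRange]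
  have hvslen : vs.length = n := by rw [hpvs.length_eq, List.length_finRange]
  -- values of vs beyond the prefix are ≥ 3
  have hvsrest : ∀ i, l.length ≤ i → i < n → 3 ≤ ((vs.getD i d : Fin n) : ℕ) := by
    intro i hi hin
    rw [hvs, List.getD_append_right _ _ _ _ (by omega)]
    set k := i - vm.length with hk
    have hklt : k < ((List.finRange n).filter (fun x => x ∉ vm)).length := by
      have : vs.length = vm.length + ((List.finRange n).filter (fun x => x ∉ vm)).length := by
        rw [hvs, List.length_append]
      omega
    rw [List.getD_eq_getElem _ d hklt]
    set x := ((List.finRange n).filter (fun x => x ∉ vm))[k] with hx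
    have hxmem : x ∈ (List.finRange n).filter (fun x => x ∉ vm) := List.getElem_mem _
    have hxnot : x ∉ vm := by
      have := List.of_mem_filter hxmem
      simpa using this
    by_contra hlt
    push_neg at hlt
    have hxA : x ≠ jA := fun h => hxnot (h ▸ hmemA)
    have hxB : x ≠ jB := fun h => hxnot (h ▸ hmemB)
    have hxC : x ≠ jC := fun h => hxnot (h ▸ hmemC)
    have h1 : (x:ℕ) ≠ (jA:ℕ) := fun h => hxA (Fin.ext h)
    have h2 : (x:ℕ) ≠ (jB:ℕ) := fun h => hxB (Fin.ext h)
    have h3 : (x:ℕ) ≠ (jC:ℕ) := fun h => hxC (Fin.ext h)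
    have g1 : (jA:ℕ) ≠ (jB:ℕ) := fun h => hAB (Fin.ext h)
    have g2 : (jA:ℕ) ≠ (jC:ℕ) := fun h => hAC (Fin.ext h)
    have g3 : (jB:ℕ) ≠ (jC:ℕ) := fun h => hBC (Fin.ext h)
    omega
  apply ham_of_lists (by omega) H us vs hpus hpvs d
  intro i hin
  rcases Nat.lt_or_ge i l.length with hi | hi
  · have hvsi : vs.getD i d = g i := by
      rw [hvs, List.getD_append _ _ _ _ (by omega), hvmget i hi]
    by_cases hip : i = p
    · subst hip
      rw [hvsi, hgp]
      have e1 : us.getD i d = l.getD i d := by rw [hus, List.getD_append _ _ _ _ (by omega)]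
      have e2 : us.getD ((i+1) % n) d = l.getD (i+1) d := by
        rw [Nat.mod_eq_of_lt (by omega), hus, List.getD_append _ _ _ _ (by omega)]
      rw [e1, e2]
      exact hadjA
    · by_cases hiq : i = q
      · subst hiq
        rw [hvsi, hgq]
        have e1 : us.getD i d = l.getD i d := by rw [hus, List.getD_append _ _ _ _ (by omega)]
        have e2 : us.getD ((i+1) % n) d = l.getD (i+1) d := by
          rw [Nat.mod_eq_of_lt (by omega), hus, List.getD_append _ _ _ _ (by omega)]
        rw [e1, e2]
        exact hadjB
      · by_cases hir : i = r
        · subst hir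
          rw [hvsi, hgr]
          have e1 : us.getD i d = l.getD i d := by rw [hus, List.getD_append _ _ _ _ (by omega)]
          have e2 : us.getD ((i+1) % n) d = l.getD (i+1) d := by
            rw [Nat.mod_eq_of_lt (by omega), hus, List.getD_append _ _ _ _ (by omega)]
          rw [e1, e2]
          exact hadjC
        · rw [hvsi]
          constructor
          · exact hcomp _ _ (by rw [hgval i hi hip hiq hir]; omega)
          · exact hcomp _ _ (by rw [hgval i hi hip hiq hir]; omega)
  · constructor
    · exact hcomp _ _ (hvsrest i hi hin)
    · exact hcomp _ _ (hvsrest i hi hin)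

noncomputable def NbrF {n : ℕ} (H : SimpleGraph (Fin n ⊕ Fin n)) (j : Fin n) : Finset (Fin n) :=
  Finset.univ.filter (fun i => H.Adj (.inl i) (.inr j))

lemma tough_bound {n : ℕ} (hn : 16 ≤ n) (H : SimpleGraph (Fin n ⊕ Fin n))
    (hbip : IsBipartition H (Set.range Sum.inl) (Set.range Sum.inr))
    (hdeg3 : ∀ j : Fin n, (j:ℕ) < 3 → (NbrF H j).card ≤ 3)
    (htough : BTough1 H (Set.range Sum.inl) (Set.range Sum.inr))
    (J : Finset (Fin n)) (hJne : J.Nonempty) (hJ3 : ∀ j ∈ J, (j:ℕ) < 3) :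
    J.card + 1 ≤ (J.biUnion (NbrF H)).card := by
  set T : Finset (Fin n) := J.biUnion (NbrF H) with hT
  set S : Set (Fin n ⊕ Fin n) := Sum.inl '' (T : Set (Fin n)) with hS
  -- T is small
  have hTcard : T.card ≤ 9 := by
    calc T.card ≤ ∑ j ∈ J, (NbrF H j).card := Finset.card_biUnion_le
    _ ≤ ∑ j ∈ J, 3 := Finset.sum_le_sum (fun j hj => hdeg3 j (hJ3 j hj))
    _ = J.card * 3 := by rw [Finset.sum_const, smul_eq_mul]
    _ ≤ 9 := by
      have : J.card ≤ 3 := by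
        have : J ⊆ Finset.univ.filter (fun j : Fin n => (j:ℕ) < 3) :=
          fun j hj => Finset.mem_filter.2 ⟨Finset.mem_univ j, hJ3 j hj⟩
        calc J.card ≤ _ := Finset.card_le_card this
        _ ≤ 3 := by
          open Fin.NatCast in
          have := Finset.card_le_card_of_injOn (fun j : Fin n => ((j:ℕ) : Fin 3))
            (s := Finset.univ.filter (fun j : Fin n => (j:ℕ) < 3)) (t := Finset.univ)
            (fun a _ => Finset.mem_univ _)
            (by
              intro a ha b hb hab
              simp only [Finset.mem_coe, Finset.mem_filter] at ha hb
              have : ((a:ℕ) : Fin 3) = ((b:ℕ) : Fin 3) := hab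
              have e1 := Fin.val_cast_of_lt (show (a:ℕ) < 3 from ha.2)
              have e2 := Fin.val_cast_of_lt (show (b:ℕ) < 3 from hb.2)
              apply Fin.ext
              rw [← e1, ← e2, this])
          simpa using this
      omega
  have hTne : ∃ i : Fin n, i ∉ T := by
    by_contra h
    push_neg at h
    have : Finset.univ ⊆ T := fun i _ => h i
    have := Finset.card_le_card this
    simp at this
    omega
  -- members of S are inl of T
  have hSsub : S ⊆ Set.range Sum.inl := by
    rintro _ ⟨i, _, rfl⟩; exact ⟨i, rfl⟩
  have hSproper : S ⊂ Set.range Sum.inl := by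
    obtain ⟨i0, hi0⟩ := hTne
    refine ⟨hSsub, fun hsub => ?_⟩
    have : (Sum.inl i0 : Fin n ⊕ Fin n) ∈ S := hsub ⟨i0, rfl⟩
    obtain ⟨i1, hi1, he⟩ := this
    rw [Sum.inl.injEq] at he
    subst he
    exact hi0 hi1
  -- vertices inr j (j ∈ J) are isolated in the induced graph
  have hmemSc : ∀ j : Fin n, (Sum.inr j : Fin n ⊕ Fin n) ∈ Sᶜ := by
    intro j hj
    obtain ⟨i, _, he⟩ := hj
    exact Sum.inl_ne_inr he
  have hiso : ∀ j ∈ J, ∀ x : (Sᶜ : Set (Fin n ⊕ Fin n)),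
      ¬ (SimpleGraph.induce Sᶜ H).Adj ⟨Sum.inr j, hmemSc j⟩ x := by
    intro j hj x hadj
    have hadj' : H.Adj (Sum.inr j) (x : Fin n ⊕ Fin n) := hadj
    rcases hbip.2.2 hadj' with ⟨h1, _⟩ | ⟨_, h2⟩
    · obtain ⟨i, hi⟩ := h1
      exact Sum.inl_ne_inr hi
    · obtain ⟨i, hi⟩ := h2
      have hxS : (x : Fin n ⊕ Fin n) ∈ S := by
        show (x : Fin n ⊕ Fin n) ∈ Sum.inl '' (T : Set (Fin n))
        refine ⟨i, ?_, hi⟩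
        have : i ∈ NbrF H j := by
          rw [NbrF, Finset.mem_filter]
          exact ⟨Finset.mem_univ i, by rw [hi]; exact hadj'.symm⟩
        exact Finset.mem_coe.2 (Finset.mem_biUnion.2 ⟨j, hj, this⟩)
      exact x.2 hxS
  -- isolated vertices: reachability implies equality
  have hisoreach : ∀ j ∈ J, ∀ x : (Sᶜ : Set (Fin n ⊕ Fin n)),
      (SimpleGraph.induce Sᶜ H).Reachable ⟨Sum.inr j, hmemSc j⟩ x →
        x = ⟨Sum.inr j, hmemSc j⟩ := by
    intro j hj x hreach
    obtain ⟨w⟩ := hreach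
    cases w with
    | nil => rfl
    | cons h p => exact absurd h (hiso j hj _)
  -- the injection into connected components
  have hrep3 : ((⟨3, by omega⟩ : Fin n) : ℕ) = 3 := rfl
  set rep : (Sᶜ : Set (Fin n ⊕ Fin n)) := ⟨Sum.inr ⟨3, by omega⟩, hmemSc _⟩ with hrep
  set φ : Option {j // j ∈ J} → (SimpleGraph.induce Sᶜ H).ConnectedComponent := fun o =>
    match o with
    | none => (SimpleGraph.induce Sᶜ H).connectedComponentMk rep
    | some j => (SimpleGraph.induce Sᶜ H).connectedComponentMk ⟨Sum.inr j.1, hmemSc j.1⟩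
    with hφ
  have hφinj : Function.Injective φ := by
    intro o1 o2 he
    match o1, o2 with
    | none, none => rfl
    | none, some j =>
      exfalso
      simp only [hφ] at he
      rw [SimpleGraph.ConnectedComponent.eq] at he
      have h0 := hisoreach j.1 j.2 rep he.symm
      rw [hrep] at h0
      have h1 : Sum.inr (⟨3, by omega⟩ : Fin n) = Sum.inr j.1 := congrArg Subtype.val h0
      rw [Sum.inr.injEq] at h1
      have h2 : ((j.1 : Fin n) : ℕ) = 3 := by rw [← h1]
      have := hJ3 j.1 j.2
      omega
    | some j, none =>
      exfalso
      simp only [hφ] at he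
      rw [SimpleGraph.ConnectedComponent.eq] at he
      have := hisoreach j.1 j.2 rep he
      rw [hrep] at this
      have : Sum.inr (⟨3, by omega⟩ : Fin n) = Sum.inr j.1 := congrArg Subtype.val this
      rw [Sum.inr.injEq] at this
      have h2 : ((j.1 : Fin n) : ℕ) = 3 := by rw [← this]
      have h3 := hJ3 j.1 j.2
      omega
    | some j1, some j2 =>
      simp only [hφ] at he
      rw [SimpleGraph.ConnectedComponent.eq] at he
      have := hisoreach j1.1 j1.2 ⟨Sum.inr j2.1, hmemSc j2.1⟩ he
      have hv : Sum.inr j2.1 = Sum.inr j1.1 := congrArg Subtype.val this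
      rw [Sum.inr.injEq] at hv
      congr 1
      exact Subtype.ext hv.symm
  have hcomp_ge : J.card + 1 ≤ numComp H S := by
    have := Nat.card_le_card_of_injective φ hφinj
    rw [numComp]
    have hcard : Nat.card (Option {j // j ∈ J}) = J.card + 1 := by
      rw [Nat.card_eq_fintype_card]
      simp
    omega
  have hSncard : S.ncard = T.card := by
    rw [hS, Set.ncard_image_of_injective _ Sum.inl_injective, Set.ncard_coe_finset]
  have hJpos : 1 ≤ J.card := Finset.card_pos.2 hJne
  have htapp := htough S (Or.inl hSproper) (by omega)
  omega

lemma nbr_eq {n : ℕ} (H : SimpleGraph (Fin n ⊕ Fin n))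
    (hbip : IsBipartition H (Set.range Sum.inl) (Set.range Sum.inr)) (j : Fin n) :
    (H.neighborSet (Sum.inr j)).ncard = (NbrF H j).card := by
  have hset : H.neighborSet (Sum.inr j) = Sum.inl '' ((NbrF H j : Finset (Fin n)) : Set (Fin n)) := by
    ext w
    simp only [SimpleGraph.mem_neighborSet]
    constructor
    · intro hadj
      rcases hbip.2.2 hadj with ⟨h1, _⟩ | ⟨_, h2⟩
      · obtain ⟨i, hi⟩ := h1
        exact absurd hi (by simp)
      · obtain ⟨i, hi⟩ := h2
        refine ⟨i, ?_, hi⟩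
        have : H.Adj (Sum.inl i) (Sum.inr j) := by rw [hi]; exact hadj.symm
        simpa [NbrF] using this
    · rintro ⟨i, hi, rfl⟩
      have : H.Adj (Sum.inl i) (Sum.inr j) := by simpa [NbrF] using hi
      exact this.symm
  rw [hset, Set.ncard_image_of_injective _ Sum.inl_injective, Set.ncard_coe_finset]


def SelOut {α : Type*} [DecidableEq α] (A B C : Finset α) (d : α) : Prop :=
  ∃ (l : List α) (p q r : ℕ), l.Nodup ∧ l.length ≤ 6 ∧
    p + 1 < l.length ∧ q + 1 < l.length ∧ r + 1 < l.length ∧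
    p ≠ q ∧ p ≠ r ∧ q ≠ r ∧
    l.getD p d ∈ A ∧ l.getD (p+1) d ∈ A ∧
    l.getD q d ∈ B ∧ l.getD (q+1) d ∈ B ∧
    l.getD r d ∈ C ∧ l.getD (r+1) d ∈ C

lemma caseIpair {α : Type*} [DecidableEq α] (A B C : Finset α) (d : α)
    (b0 b1 c0 c1 : α)
    (hb0 : b0 ∈ B) (hb1 : b1 ∈ B) (hc0 : c0 ∈ C) (hc1 : c1 ∈ C)
    (hbb : b0 ≠ b1) (hcc : c0 ≠ c1)
    (h3 : b0 ≠ c0) (h4 : b0 ≠ c1) (h5 : b1 ≠ c0) (h6 : b1 ≠ c1)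
    (x y : α) (hxA : x ∈ A) (hyA : y ∈ A) (hxy : x ≠ y)
    (hbanB : ¬((x = b0 ∧ y = b1) ∨ (x = b1 ∧ y = b0)))
    (hbanC : ¬((x = c0 ∧ y = c1) ∨ (x = c1 ∧ y = c0))) :
    SelOut A B C d := by
  have hbb' : b1 ≠ b0 := hbb.symm
  have hcc' : c1 ≠ c0 := hcc.symm
  have h3' : c0 ≠ b0 := h3.symm
  have h4' : c1 ≠ b0 := h4.symm
  have h5' : c0 ≠ b1 := h5.symm
  have h6' : c1 ≠ b1 := h6.symm
  have hxy' : y ≠ x := hxy.symm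
  by_cases hxb0 : x = b0
  · have hyb1 : ¬ y = b1 := fun h => hbanB (Or.inl ⟨hxb0, h⟩)
    have hyb0 : ¬ y = b0 := fun h => hxy (by rw [hxb0, h])
    by_cases hyc0 : y = c0
    · refine ⟨[b1,b0,c0,c1], 1, 0, 2, by simp_all, by simp, by simp, by simp, by simp,
        by simp, by simp, by simp, ?_, ?_, ?_, ?_, ?_, ?_⟩ <;> simp [List.getD]
      exacts [hxb0 ▸ hxA, hyc0 ▸ hyA, hb1, hb0, hc0, hc1]
    · by_cases hyc1 : y = c1
      · refine ⟨[b1,b0,c1,c0], 1, 0, 2, by simp_all, by simp, by simp, by simp, by simp,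
          by simp, by simp, by simp, ?_, ?_, ?_, ?_, ?_, ?_⟩ <;> simp [List.getD]
        exacts [hxb0 ▸ hxA, hyc1 ▸ hyA, hb1, hb0, hc1, hc0]
      · refine ⟨[y,b0,b1,c0,c1], 0, 1, 3, by simp_all, by simp, by simp, by simp, by simp,
          by simp, by simp, by simp, ?_, ?_, ?_, ?_, ?_, ?_⟩ <;> simp [List.getD]
        exacts [hyA, hxb0 ▸ hxA, hb0, hb1, hc0, hc1]
  · by_cases hxb1 : x = b1
    · have hyb0 : ¬ y = b0 := fun h => hbanB (Or.inr ⟨hxb1, h⟩)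
      have hyb1 : ¬ y = b1 := fun h => hxy (by rw [hxb1, h])
      by_cases hyc0 : y = c0
      · refine ⟨[b0,b1,c0,c1], 1, 0, 2, by simp_all, by simp, by simp, by simp, by simp,
          by simp, by simp, by simp, ?_, ?_, ?_, ?_, ?_, ?_⟩ <;> simp [List.getD]
        exacts [hxb1 ▸ hxA, hyc0 ▸ hyA, hb0, hb1, hc0, hc1]
      · by_cases hyc1 : y = c1
        · refine ⟨[b0,b1,c1,c0], 1, 0, 2, by simp_all, by simp, by simp, by simp, by simp,
            by simp, by simp, by simp, ?_, ?_, ?_, ?_, ?_, ?_⟩ <;> simp [List.getD]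
          exacts [hxb1 ▸ hxA, hyc1 ▸ hyA, hb0, hb1, hc1, hc0]
        · refine ⟨[y,b1,b0,c0,c1], 0, 1, 3, by simp_all, by simp, by simp, by simp, by simp,
            by simp, by simp, by simp, ?_, ?_, ?_, ?_, ?_, ?_⟩ <;> simp [List.getD]
          exacts [hyA, hxb1 ▸ hxA, hb1, hb0, hc0, hc1]
    · by_cases hxc0 : x = c0
      · have hyc1 : ¬ y = c1 := fun h => hbanC (Or.inl ⟨hxc0, h⟩)
        have hyc0 : ¬ y = c0 := fun h => hxy (by rw [hxc0, h])
        by_cases hyb0 : y = b0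
        · refine ⟨[b1,b0,c0,c1], 1, 0, 2, by simp_all, by simp, by simp, by simp, by simp,
            by simp, by simp, by simp, ?_, ?_, ?_, ?_, ?_, ?_⟩ <;> simp [List.getD]
          exacts [hyb0 ▸ hyA, hxc0 ▸ hxA, hb1, hb0, hc0, hc1]
        · by_cases hyb1 : y = b1
          · refine ⟨[b0,b1,c0,c1], 1, 0, 2, by simp_all, by simp, by simp, by simp, by simp,
              by simp, by simp, by simp, ?_, ?_, ?_, ?_, ?_, ?_⟩ <;> simp [List.getD]
            exacts [hyb1 ▸ hyA, hxc0 ▸ hxA, hb0, hb1, hc0, hc1]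
          · refine ⟨[y,c0,c1,b0,b1], 0, 3, 1, by simp_all, by simp, by simp, by simp, by simp,
              by simp, by simp, by simp, ?_, ?_, ?_, ?_, ?_, ?_⟩ <;> simp [List.getD]
            exacts [hyA, hxc0 ▸ hxA, hb0, hb1, hc0, hc1]
      · by_cases hxc1 : x = c1
        · have hyc0 : ¬ y = c0 := fun h => hbanC (Or.inr ⟨hxc1, h⟩)
          have hyc1 : ¬ y = c1 := fun h => hxy (by rw [hxc1, h])
          by_cases hyb0 : y = b0
          · refine ⟨[b1,b0,c1,c0], 1, 0, 2, by simp_all, by simp, by simp, by simp, by simp,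
              by simp, by simp, by simp, ?_, ?_, ?_, ?_, ?_, ?_⟩ <;> simp [List.getD]
            exacts [hyb0 ▸ hyA, hxc1 ▸ hxA, hb1, hb0, hc1, hc0]
          · by_cases hyb1 : y = b1
            · refine ⟨[b0,b1,c1,c0], 1, 0, 2, by simp_all, by simp, by simp, by simp, by simp,
                by simp, by simp, by simp, ?_, ?_, ?_, ?_, ?_, ?_⟩ <;> simp [List.getD]
              exacts [hyb1 ▸ hyA, hxc1 ▸ hxA, hb0, hb1, hc1, hc0]
            · refine ⟨[y,c1,c0,b0,b1], 0, 3, 1, by simp_all, by simp, by simp, by simp, by simp,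
                by simp, by simp, by simp, ?_, ?_, ?_, ?_, ?_, ?_⟩ <;> simp [List.getD]
              exacts [hyA, hxc1 ▸ hxA, hb0, hb1, hc1, hc0]
        · -- x fresh
          by_cases hyb0 : y = b0
          · refine ⟨[x,b0,b1,c0,c1], 0, 1, 3, by simp_all, by simp, by simp, by simp, by simp,
              by simp, by simp, by simp, ?_, ?_, ?_, ?_, ?_, ?_⟩ <;> simp [List.getD]
            exacts [hxA, hyb0 ▸ hyA, hb0, hb1, hc0, hc1]
          · by_cases hyb1 : y = b1
            · refine ⟨[x,b1,b0,c0,c1], 0, 1, 3, by simp_all, by simp, by simp, by simp, by simp,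
                by simp, by simp, by simp, ?_, ?_, ?_, ?_, ?_, ?_⟩ <;> simp [List.getD]
              exacts [hxA, hyb1 ▸ hyA, hb1, hb0, hc0, hc1]
            · by_cases hyc0 : y = c0
              · refine ⟨[x,c0,c1,b0,b1], 0, 3, 1, by simp_all, by simp, by simp, by simp,
                  by simp, by simp, by simp, by simp, ?_, ?_, ?_, ?_, ?_, ?_⟩ <;> simp [List.getD]
                exacts [hxA, hyc0 ▸ hyA, hb0, hb1, hc0, hc1]
              · by_cases hyc1 : y = c1
                · refine ⟨[x,c1,c0,b0,b1], 0, 3, 1, by simp_all, by simp, by simp, by simp,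
                    by simp, by simp, by simp, by simp, ?_, ?_, ?_, ?_, ?_, ?_⟩ <;> simp [List.getD]
                  exacts [hxA, hyc1 ▸ hyA, hb0, hb1, hc1, hc0]
                · refine ⟨[x,y,b0,b1,c0,c1], 0, 2, 4, by simp_all, by simp, by simp, by simp,
                    by simp, by simp, by simp, by simp, ?_, ?_, ?_, ?_, ?_, ?_⟩ <;> simp [List.getD]
                  exacts [hxA, hyA, hb0, hb1, hc0, hc1]

lemma disjoint_pairs {α : Type*} [DecidableEq α] (B C : Finset α)
    (hB2 : 2 ≤ B.card) (hC2 : 2 ≤ C.card) (h4 : 4 ≤ (B ∪ C).card) :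
    ∃ b0 b1 c0 c1, b0 ∈ B ∧ b1 ∈ B ∧ c0 ∈ C ∧ c1 ∈ C ∧ b0 ≠ b1 ∧ c0 ≠ c1 ∧
      b0 ≠ c0 ∧ b0 ≠ c1 ∧ b1 ≠ c0 ∧ b1 ≠ c1 := by
  have hcard : (B \ C).card + C.card = (B ∪ C).card := Finset.card_sdiff_add_card B C
  by_cases hk : 2 ≤ (B \ C).card
  · obtain ⟨b0, hb0, b1, hb1, hbb⟩ := (Finset.one_lt_card (s := B \ C)).1 (by omega)
    obtain ⟨c0, hc0, c1, hc1, hcc⟩ := (Finset.one_lt_card (s := C)).1 (by omega)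
    have hb0' := Finset.mem_sdiff.1 hb0
    have hb1' := Finset.mem_sdiff.1 hb1
    exact ⟨b0, b1, c0, c1, hb0'.1, hb1'.1, hc0, hc1, hbb, hcc,
      fun h => hb0'.2 (h ▸ hc0), fun h => hb0'.2 (h ▸ hc1),
      fun h => hb1'.2 (h ▸ hc0), fun h => hb1'.2 (h ▸ hc1)⟩
  · -- B \ C small, so C is big
    have hC3 : 3 ≤ C.card := by omega
    rcases Nat.lt_or_ge (B \ C).card 1 with hk0 | hk1
    · -- B ⊆ C, so C.card ≥ 4
      have hBsub : B ⊆ C := by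
        intro x hx
        by_contra hxc
        have : x ∈ B \ C := Finset.mem_sdiff.2 ⟨hx, hxc⟩
        have := Finset.card_pos.2 ⟨x, this⟩
        omega
      have hC4 : 4 ≤ C.card := by omega
      obtain ⟨b0, hb0, b1, hb1, hbb⟩ := Finset.one_lt_card.1 (by omega : 1 < B.card)
      have : 2 ≤ (C \ {b0, b1}).card := by
        have h1 : ({b0, b1} : Finset α).card ≤ 2 := Finset.card_insert_le _ _ |>.trans (by simp)
        have := Finset.le_card_sdiff ({b0, b1} : Finset α) C
        omega
      obtain ⟨c0, hc0, c1, hc1, hcc⟩ := (Finset.one_lt_card (s := C \ {b0, b1})).1 (by omega)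
      have hc0' := Finset.mem_sdiff.1 hc0
      have hc1' := Finset.mem_sdiff.1 hc1
      have hc0n : c0 ≠ b0 ∧ c0 ≠ b1 := by
        have := hc0'.2; simp at this; tauto
      have hc1n : c1 ≠ b0 ∧ c1 ≠ b1 := by
        have := hc1'.2; simp at this; tauto
      exact ⟨b0, b1, c0, c1, hb0, hb1, hc0'.1, hc1'.1, hbb, hcc,
        (hc0n.1).symm, (hc1n.1).symm, (hc0n.2).symm, (hc1n.2).symm⟩
    · -- (B \ C).card = 1
      have hk1' : (B \ C).card = 1 := by omega
      obtain ⟨x, hx⟩ := Finset.card_eq_one.1 hk1'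
      have hxB : x ∈ B ∧ x ∉ C := by
        have : x ∈ B \ C := by rw [hx]; simp
        exact Finset.mem_sdiff.1 this
      have hBC1 : 1 ≤ (B ∩ C).card := by
        have := Finset.card_inter_add_card_union B C
        have hC' : C.card ≤ (B ∪ C).card := Finset.card_le_card Finset.subset_union_right
        omega
      obtain ⟨b1, hb1⟩ := (Finset.card_pos (s := B ∩ C)).1 (by omega)
      have hb1' := Finset.mem_inter.1 hb1
      have hxb1 : x ≠ b1 := fun h => hxB.2 (h ▸ hb1'.2)
      have : 2 ≤ (C \ {b1}).card := by
        have h1 : ({b1} : Finset α).card = 1 := rfl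
        have := Finset.le_card_sdiff ({b1} : Finset α) C
        omega
      obtain ⟨c0, hc0, c1, hc1, hcc⟩ := (Finset.one_lt_card (s := C \ {b1})).1 (by omega)
      have hc0' := Finset.mem_sdiff.1 hc0
      have hc1' := Finset.mem_sdiff.1 hc1
      have hc0n : c0 ≠ b1 := by have := hc0'.2; simp at this; tauto
      have hc1n : c1 ≠ b1 := by have := hc1'.2; simp at this; tauto
      exact ⟨x, b1, c0, c1, hxB.1, hb1'.1, hc0'.1, hc1'.1, hxb1, hcc,
        fun h => hxB.2 (h ▸ hc0'.1), fun h => hxB.2 (h ▸ hc1'.1),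
        hc0n.symm, hc1n.symm⟩

lemma caseI {α : Type*} [DecidableEq α] (A B C : Finset α) (d : α) (hA : A.card = 3)
    (b0 b1 c0 c1 : α)
    (hb0 : b0 ∈ B) (hb1 : b1 ∈ B) (hc0 : c0 ∈ C) (hc1 : c1 ∈ C)
    (hbb : b0 ≠ b1) (hcc : c0 ≠ c1)
    (h3 : b0 ≠ c0) (h4 : b0 ≠ c1) (h5 : b1 ≠ c0) (h6 : b1 ≠ c1) :
    SelOut A B C d := by
  obtain ⟨a1, a2, a3, h12, h13, h23, hAeq⟩ := Finset.card_eq_three.1 hA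
  have ha1 : a1 ∈ A := by rw [hAeq]; simp
  have ha2 : a2 ∈ A := by rw [hAeq]; simp
  have ha3 : a3 ∈ A := by rw [hAeq]; simp
  by_cases hban12 : ((a1 = b0 ∧ a2 = b1) ∨ (a1 = b1 ∧ a2 = b0)) ∨
      ((a1 = c0 ∧ a2 = c1) ∨ (a1 = c1 ∧ a2 = c0))
  · -- then (a1, a3) is not banned
    have hB13 : ¬((a1 = b0 ∧ a3 = b1) ∨ (a1 = b1 ∧ a3 = b0)) := by
      rcases hban12 with (⟨e1,e2⟩|⟨e1,e2⟩)|(⟨e1,e2⟩|⟨e1,e2⟩) <;>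
        rintro (⟨f1,f2⟩|⟨f1,f2⟩) <;> simp_all
    have hC13 : ¬((a1 = c0 ∧ a3 = c1) ∨ (a1 = c1 ∧ a3 = c0)) := by
      rcases hban12 with (⟨e1,e2⟩|⟨e1,e2⟩)|(⟨e1,e2⟩|⟨e1,e2⟩) <;>
        rintro (⟨f1,f2⟩|⟨f1,f2⟩) <;> simp_all
    exact caseIpair A B C d b0 b1 c0 c1 hb0 hb1 hc0 hc1 hbb hcc h3 h4 h5 h6
      a1 a3 ha1 ha3 h13 hB13 hC13
  · push_neg at hban12
    exact caseIpair A B C d b0 b1 c0 c1 hb0 hb1 hc0 hc1 hbb hcc h3 h4 h5 h6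
      a1 a2 ha1 ha2 h12 (by tauto) (by tauto)

lemma caseII {α : Type*} [DecidableEq α] (A B C : Finset α) (d : α) (hA : A.card = 3)
    (hB2 : 2 ≤ B.card) (hC2 : 2 ≤ C.card) (hBC3 : (B ∪ C).card = 3)
    (hABC : 4 ≤ (A ∪ B ∪ C).card) :
    SelOut A B C d := by
  -- find m ∈ B ∩ C
  have hBCint : 1 ≤ (B ∩ C).card := by
    have := Finset.card_inter_add_card_union B C
    omega
  obtain ⟨m, hm⟩ := (Finset.card_pos (s := B ∩ C)).1 (by omega)
  have hm' := Finset.mem_inter.1 hm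
  have hmBC : m ∈ B ∪ C := Finset.mem_union_left _ hm'.1
  -- the other two elements of B ∪ C
  have hsd : ((B ∪ C) \ {m}).card = 2 := by
    rw [Finset.card_sdiff_of_subset (by simpa using hmBC)]
    simp [hBC3]
  obtain ⟨s, t, hst, hsdeq⟩ := Finset.card_eq_two.1 hsd
  have hs : s ∈ B ∪ C ∧ s ≠ m := by
    have : s ∈ (B ∪ C) \ {m} := by rw [hsdeq]; simp
    have := Finset.mem_sdiff.1 this
    simpa using this
  have ht : t ∈ B ∪ C ∧ t ≠ m := by
    have : t ∈ (B ∪ C) \ {m} := by rw [hsdeq]; simp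
    have := Finset.mem_sdiff.1 this
    simpa using this
  have hBCeq : B ∪ C = {m, s, t} := by
    have h1 : insert m ((B ∪ C) \ {m}) = B ∪ C := by
      rw [Finset.sdiff_singleton_eq_erase, Finset.insert_erase hmBC]
    rw [← h1, hsdeq]
  -- every element of B and of C lies in {m, s, t}
  have hBsub : ∀ z ∈ B, z = m ∨ z = s ∨ z = t := by
    intro z hz
    have : z ∈ B ∪ C := Finset.mem_union_left _ hz
    rw [hBCeq] at this
    simpa using this
  have hCsub : ∀ z ∈ C, z = m ∨ z = s ∨ z = t := by
    intro z hz
    have : z ∈ B ∪ C := Finset.mem_union_right _ hz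
    rw [hBCeq] at this
    simpa using this
  -- b ∈ B, c ∈ C among {s, t}
  have hkey : (s ∈ B ∧ t ∈ C) ∨ (t ∈ B ∧ s ∈ C) := by
    by_contra h
    push_neg at h
    obtain ⟨h1, h2⟩ := h
    rcases Finset.mem_union.1 hs.1 with hsB | hsC
    · have htC : t ∉ C := h1 hsB
      have htB : t ∈ B := by
        rcases Finset.mem_union.1 ht.1 with h' | h'
        · exact h'
        · exact absurd h' htC
      have hsC : s ∉ C := h2 htB
      -- then C ⊆ {m}, contradicting hC2
      have : ∀ z ∈ C, z = m := by
        intro z hz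
        rcases hCsub z hz with h' | h' | h'
        · exact h'
        · exact absurd (h' ▸ hz) hsC
        · exact absurd (h' ▸ hz) htC
      obtain ⟨z1, hz1, z2, hz2, hzz⟩ := (Finset.one_lt_card (s := C)).1 (by omega)
      exact hzz ((this z1 hz1).trans (this z2 hz2).symm)
    · have htB : t ∉ B := by
        intro htB
        exact (h2 htB) hsC
      have htC : t ∈ C := by
        rcases Finset.mem_union.1 ht.1 with h' | h'
        · exact absurd h' htB
        · exact h'
      have hsB : s ∉ B := by
        intro hsB
        exact (h1 hsB) htC
      have : ∀ z ∈ B, z = m := by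
        intro z hz
        rcases hBsub z hz with h' | h' | h'
        · exact h'
        · exact absurd (h' ▸ hz) hsB
        · exact absurd (h' ▸ hz) htB
      obtain ⟨z1, hz1, z2, hz2, hzz⟩ := (Finset.one_lt_card (s := B)).1 (by omega)
      exact hzz ((this z1 hz1).trans (this z2 hz2).symm)
  -- f ∈ A outside B ∪ C
  have hfex : 1 ≤ (A \ (B ∪ C)).card := by
    have := Finset.card_sdiff_add_card A (B ∪ C)
    have : (A ∪ (B ∪ C)).card = (A ∪ B ∪ C).card := by rw [Finset.union_assoc]
    have h2 := Finset.card_sdiff_add_card A (B ∪ C)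
    omega
  obtain ⟨f, hf⟩ := (Finset.card_pos (s := A \ (B ∪ C))).1 (by omega)
  have hf' := Finset.mem_sdiff.1 hf
  have hfA : f ∈ A := hf'.1
  have hfm : f ≠ m := fun h => hf'.2 (h ▸ hmBC)
  have hfs : f ≠ s := fun h => hf'.2 (h ▸ hs.1)
  have hft : f ≠ t := fun h => hf'.2 (h ▸ ht.1)
  -- x ∈ A, x ≠ f, x ≠ m
  have hxex : 1 ≤ (A \ {f, m}).card := by
    have := Finset.le_card_sdiff ({f, m} : Finset α) A
    have hc2 : ({f, m} : Finset α).card ≤ 2 := Finset.card_insert_le _ _ |>.trans (by simp)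
    omega
  obtain ⟨x, hx⟩ := (Finset.card_pos (s := A \ {f, m})).1 (by omega)
  have hx' := Finset.mem_sdiff.1 hx
  have hxA : x ∈ A := hx'.1
  have hxf : x ≠ f := by have := hx'.2; simp at this; tauto
  have hxm : x ≠ m := by have := hx'.2; simp at this; tauto
  have hsm : s ≠ m := hs.2
  have hms : m ≠ s := hs.2.symm
  have htm : t ≠ m := ht.2
  have hmt : m ≠ t := ht.2.symm
  have hts : t ≠ s := hst.symm
  have hsf : s ≠ f := fun h => hfs h.symm
  have htf : t ≠ f := fun h => hft h.symm
  have hmf : m ≠ f := fun h => hfm h.symm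
  have hfx : f ≠ x := fun h => hxf h.symm
  -- now the two symmetric versions
  rcases hkey with ⟨hbB, hcC⟩ | ⟨hbB, hcC⟩
  · -- b := s, c := t
    by_cases hxs : x = s
    · refine ⟨[f,s,m,t], 0, 1, 2, by simp; aesop, by simp, by simp, by simp,
        by simp, by simp, by simp, by simp, ?_, ?_, ?_, ?_, ?_, ?_⟩ <;> simp [List.getD]
      exacts [hfA, hxs ▸ hxA, hbB, hm'.1, hm'.2, hcC]
    · by_cases hxt : x = t
      · refine ⟨[f,t,m,s], 0, 2, 1, by simp; aesop, by simp, by simp, by simp,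
          by simp, by simp, by simp, by simp, ?_, ?_, ?_, ?_, ?_, ?_⟩ <;> simp [List.getD]
        exacts [hfA, hxt ▸ hxA, hm'.1, hbB, hxt ▸ (hcC : t ∈ C), hm'.2]
      · refine ⟨[s,m,t,f,x], 3, 0, 1, by simp; aesop, by simp, by simp,
          by simp, by simp, by simp, by simp, by simp, ?_, ?_, ?_, ?_, ?_, ?_⟩ <;>
          simp [List.getD]
        exacts [hfA, hxA, hbB, hm'.1, hm'.2, hcC]
  · -- b := t, c := s
    by_cases hxt : x = t
    · refine ⟨[f,t,m,s], 0, 1, 2, by simp; aesop, by simp, by simp, by simp,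
        by simp, by simp, by simp, by simp, ?_, ?_, ?_, ?_, ?_, ?_⟩ <;> simp [List.getD]
      exacts [hfA, hxt ▸ hxA, hbB, hm'.1, hm'.2, hcC]
    · by_cases hxs : x = s
      · refine ⟨[f,s,m,t], 0, 2, 1, by simp; aesop, by simp, by simp, by simp,
          by simp, by simp, by simp, by simp, ?_, ?_, ?_, ?_, ?_, ?_⟩ <;> simp [List.getD]
        exacts [hfA, hxs ▸ hxA, hm'.1, hbB, hxs ▸ (hcC : s ∈ C), hm'.2]
      · refine ⟨[t,m,s,f,x], 3, 0, 1, by simp; aesop, by simp, by simp,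
          by simp, by simp, by simp, by simp, by simp, ?_, ?_, ?_, ?_, ?_, ?_⟩ <;>
          simp [List.getD]
        exacts [hfA, hxA, hbB, hm'.1, hm'.2, hcC]


lemma selection {α : Type*} [DecidableEq α] (A B C : Finset α) (d : α)
    (hA : A.card = 3) (hB2 : 2 ≤ B.card) (hC2 : 2 ≤ C.card)
    (hBC3 : 3 ≤ (B ∪ C).card) (hABC : 4 ≤ (A ∪ B ∪ C).card) :
    SelOut A B C d := by
  rcases Nat.lt_or_ge (B ∪ C).card 4 with h | h
  · exact caseII A B C d hA hB2 hC2 (by omega) hABC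
  · obtain ⟨b0, b1, c0, c1, hb0, hb1, hc0, hc1, hbb, hcc, h3, h4, h5, h6⟩ :=
      disjoint_pairs B C hB2 hC2 h
    exact caseI A B C d hA b0 b1 c0 c1 hb0 hb1 hc0 hc1 hbb hcc h3 h4 h5 h6

lemma final_step {n : ℕ} (hn : 16 ≤ n) (H : SimpleGraph (Fin n ⊕ Fin n))
    (hcomp : ∀ i j : Fin n, 3 ≤ (j : ℕ) → H.Adj (Sum.inl i) (Sum.inr j))
    (jA jB jC : Fin n) (hjA : (jA:ℕ) < 3) (hjB : (jB:ℕ) < 3) (hjC : (jC:ℕ) < 3)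
    (hAB : jA ≠ jB) (hAC : jA ≠ jC) (hBC : jB ≠ jC)
    (hA3 : (NbrF H jA).card = 3) (hB2 : 2 ≤ (NbrF H jB).card) (hC2 : 2 ≤ (NbrF H jC).card)
    (hBCu : 3 ≤ (NbrF H jB ∪ NbrF H jC).card)
    (hABCu : 4 ≤ (NbrF H jA ∪ NbrF H jB ∪ NbrF H jC).card) :
    H.IsHamiltonian := by
  obtain ⟨l, p, q, r, hnd, hlen, hp, hq, hr, hpq, hpr, hqr, m1, m2, m3, m4, m5, m6⟩ :=
    selection (NbrF H jA) (NbrF H jB) (NbrF H jC) ⟨0, by omega⟩ hA3 hB2 hC2 hBCu hABCu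
  have adj : ∀ {i : Fin n} {jj : Fin n}, i ∈ NbrF H jj → H.Adj (Sum.inl i) (Sum.inr jj) :=
    fun hi => (Finset.mem_filter.1 hi).2
  exact assemble hn H hcomp l hnd hlen jA jB jC hjA hjB hjC hAB hAC hBC p q r hp hq hr
    hpq hpr hqr ⟨0, by omega⟩ ⟨adj m1, adj m2⟩ ⟨adj m3, adj m4⟩ ⟨adj m5, adj m6⟩


end Aux

/-- Let `n ≥ 16` and let `H` be balanced bipartite containing all edges
`u_i v_j` for `j ≥ 4`, with `d(vᵢ) ≤ 3` for `i = 1, 2, 3`. If `H` has bipartite toughness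
at least `1` and no Hamilton cycle, then `d(vᵢ) = 2` for `i = 1, 2, 3`. (Indices 0-based.) -/

theorem stmt15 (n : ℕ) (hn : 16 ≤ n) (H : SimpleGraph (Fin n ⊕ Fin n))
    (hbip : IsBipartition H (Set.range Sum.inl) (Set.range Sum.inr))
    (hcomp : ∀ i j : Fin n, 3 ≤ (j : ℕ) → H.Adj (Sum.inl i) (Sum.inr j))
    (hdeg : ∀ j : Fin n, (j : ℕ) < 3 → (H.neighborSet (Sum.inr j)).ncard ≤ 3)
    (htough : BTough1 H (Set.range Sum.inl) (Set.range Sum.inr))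
    (hham : ¬ H.IsHamiltonian) :
    ∀ j : Fin n, (j : ℕ) < 3 → (H.neighborSet (Sum.inr j)).ncard = 2 := by
  have hub : ∀ jj : Fin n, (jj:ℕ) < 3 → (NbrF H jj).card ≤ 3 := fun jj hjj => by
    rw [← nbr_eq H hbip jj]; exact hdeg jj hjj
  have hsingle : ∀ jj : Fin n, (jj:ℕ) < 3 → 2 ≤ (NbrF H jj).card := by
    intro jj hjj
    have hb := tough_bound hn H hbip hub htough {jj} (by simp) (by simpa using hjj)
    simpa using hb
  have hpairB : ∀ ja jb : Fin n, (ja:ℕ) < 3 → (jb:ℕ) < 3 → ja ≠ jb →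
      3 ≤ (NbrF H ja ∪ NbrF H jb).card := by
    intro ja jb h1 h2 hne
    have hb := tough_bound hn H hbip hub htough {ja, jb} ⟨ja, by simp⟩
      (by intro x hx; simp at hx; rcases hx with rfl | rfl <;> assumption)
    have hcard : ({ja, jb} : Finset (Fin n)).card = 2 := by
      rw [Finset.card_insert_of_notMem (by simpa using hne)]
      simp
    have hbu : ({ja, jb} : Finset (Fin n)).biUnion (NbrF H) = NbrF H ja ∪ NbrF H jb := by
      simp [Finset.biUnion_insert]
    rw [hcard, hbu] at hb
    exact hb
  have htripB : ∀ ja jb jc : Fin n, (ja:ℕ) < 3 → (jb:ℕ) < 3 → (jc:ℕ) < 3 →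
      ja ≠ jb → ja ≠ jc → jb ≠ jc →
      4 ≤ (NbrF H ja ∪ NbrF H jb ∪ NbrF H jc).card := by
    intro ja jb jc h1 h2 h3 hab hac hbc
    have hb := tough_bound hn H hbip hub htough {ja, jb, jc} ⟨ja, by simp⟩
      (by intro x hx; simp at hx; rcases hx with rfl | rfl | rfl <;> assumption)
    have hcard : ({ja, jb, jc} : Finset (Fin n)).card = 3 := by
      rw [Finset.card_insert_of_notMem (by simp [hab, hac]),
        Finset.card_insert_of_notMem (by simpa using hbc)]
      simp
    have hbu : ({ja, jb, jc} : Finset (Fin n)).biUnion (NbrF H) =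
        NbrF H ja ∪ NbrF H jb ∪ NbrF H jc := by
      simp [Finset.biUnion_insert, Finset.union_assoc]
    rw [hcard, hbu] at hb
    exact hb
  intro jj hjj
  rw [nbr_eq H hbip jj]
  by_contra hne2
  have h3c : (NbrF H jj).card = 3 := by
    have := hub jj hjj
    have := hsingle jj hjj
    omega
  obtain ⟨z0, hz0⟩ : ∃ z : Fin n, (z:ℕ) = 0 := ⟨⟨0, by omega⟩, rfl⟩
  obtain ⟨z1, hz1⟩ : ∃ z : Fin n, (z:ℕ) = 1 := ⟨⟨1, by omega⟩, rfl⟩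
  obtain ⟨z2, hz2⟩ : ∃ z : Fin n, (z:ℕ) = 2 := ⟨⟨2, by omega⟩, rfl⟩
  apply hham
  have hval : (jj:ℕ) = 0 ∨ (jj:ℕ) = 1 ∨ (jj:ℕ) = 2 := by omega
  rcases hval with h | h | h
  · exact final_step hn H hcomp jj z1 z2 (by omega) (by omega) (by omega)
      (fun he => by rw [he] at h; omega) (fun he => by rw [he] at h; omega)
      (fun he => by rw [he] at hz1; omega)
      h3c (hsingle z1 (by omega)) (hsingle z2 (by omega))
      (hpairB z1 z2 (by omega) (by omega) (fun he => by rw [he] at hz1; omega))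
      (htripB jj z1 z2 (by omega) (by omega) (by omega)
        (fun he => by rw [he] at h; omega) (fun he => by rw [he] at h; omega)
        (fun he => by rw [he] at hz1; omega))
  · exact final_step hn H hcomp jj z0 z2 (by omega) (by omega) (by omega)
      (fun he => by rw [he] at h; omega) (fun he => by rw [he] at h; omega)
      (fun he => by rw [he] at hz0; omega)
      h3c (hsingle z0 (by omega)) (hsingle z2 (by omega))
      (hpairB z0 z2 (by omega) (by omega) (fun he => by rw [he] at hz0; omega))
      (htripB jj z0 z2 (by omega) (by omega) (by omega)
        (fun he => by rw [he] at h; omega) (fun he => by rw [he] at h; omega)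
        (fun he => by rw [he] at hz0; omega))
  · exact final_step hn H hcomp jj z0 z1 (by omega) (by omega) (by omega)
      (fun he => by rw [he] at h; omega) (fun he => by rw [he] at h; omega)
      (fun he => by rw [he] at hz0; omega)
      h3c (hsingle z0 (by omega)) (hsingle z1 (by omega))
      (hpairB z0 z1 (by omega) (by omega) (fun he => by rw [he] at hz0; omega))
      (htripB jj z0 z1 (by omega) (by omega) (by omega)
        (fun he => by rw [he] at h; omega) (fun he => by rw [he] at h; omega)
        (fun he => by rw [he] at hz0; omega))
end

section
/- Let n ≥ 16 and let H be a balanced bipartite graph with parts X = {u_1,…,u_n} and Y = {v_1,…,v_n} such that u_i is adjacent to v_j for all 1 ≤ i ≤ n and 4 ≤ j ≤ n, and such that d_H(v_i) = 2 for i = 1, 2, 3. If the bipartite toughness of H satisfies t^B(H) ≥ 1 and H contains no Hamilton cycle, then there is a vertex u ∈ X adjacent to all three of v_1, v_2, v_3, and the second neighbors of v_1, v_2, v_3 (their neighbors other than u) are pairwise distinct; consequently H is isomorphic to G_{n,n}. -/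
open SimpleGraph

section CycleLemma
variable {V : Type*} {G : SimpleGraph V}

/-- A chain walk along `d j, d (j+1), ..., d (j+fuel)`. -/
def chainAux (G : SimpleGraph V) (d : ℕ → V) (hadj : ∀ j, G.Adj (d j) (d (j+1))) :
    (fuel j : ℕ) → G.Walk (d j) (d (j + fuel))
  | 0, j => Walk.nil.copy rfl (congrArg d (by omega))
  | (fuel+1), j =>
      (Walk.cons (hadj j) (chainAux G d hadj fuel (j+1))).copy rfl (congrArg d (by omega))

lemma chainAux_support (G : SimpleGraph V) (d : ℕ → V) (hadj : ∀ j, G.Adj (d j) (d (j+1)))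
    (fuel j : ℕ) :
    (chainAux G d hadj fuel j).support = (List.range (fuel+1)).map (fun i => d (j+i)) := by
  induction fuel generalizing j with
  | zero => simp [chainAux, List.range_succ]
  | succ fuel ih =>
      rw [chainAux, Walk.support_copy, Walk.support_cons, ih,
        List.range_succ_eq_map (n := fuel+1)]
      simp only [List.map_cons, List.map_map]
      congr 1
      apply List.map_congr_left
      intro a _
      simp only [Function.comp_apply]
      congr 1
      omega

lemma chainAux_edges (G : SimpleGraph V) (d : ℕ → V) (hadj : ∀ j, G.Adj (d j) (d (j+1)))
    (fuel j : ℕ) :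
    (chainAux G d hadj fuel j).edges = (List.range fuel).map (fun i => s(d (j+i), d (j+i+1))) := by
  induction fuel generalizing j with
  | zero => simp [chainAux]
  | succ fuel ih =>
      rw [chainAux, Walk.edges_copy, Walk.edges_cons, ih,
        List.range_succ_eq_map (n := fuel)]
      simp only [List.map_cons, List.map_map]
      congr 1
      apply List.map_congr_left
      intro a _
      simp only [Function.comp_apply]
      rw [show j+1+a = j+(a+1) from by omega]

lemma isHamiltonian_of_cycleFn [Fintype V] [DecidableEq V] {m : ℕ} (hm : 3 ≤ m)
    (c : Fin m → V) (hinj : Function.Injective c) (hsurj : Function.Surjective c)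
    (hadj : ∀ i : Fin m, G.Adj (c i)
      (c ⟨(i.val+1) % m, Nat.mod_lt _ (by omega)⟩)) : G.IsHamiltonian := by
  intro _
  have hmpos : 0 < m := by omega
  set d : ℕ → V := fun j => c ⟨j % m, Nat.mod_lt _ hmpos⟩ with hd_def
  have hdmod : ∀ j k : ℕ, j % m = k % m → d j = d k := by
    intro j k h; simp only [hd_def, h]
  have hdinj : ∀ j k : ℕ, d j = d k → j % m = k % m := by
    intro j k h
    have := hinj h
    simpa using congrArg Fin.val this
  have hd : ∀ j, G.Adj (d j) (d (j+1)) := by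
    intro j
    have e : (j+1) % m = (j % m + 1) % m := by
      conv_lhs => rw [Nat.add_mod]
      rw [Nat.mod_eq_of_lt (show 1 < m by omega)]
    have h1 : d (j+1) = d (j % m + 1) := hdmod _ _ e
    rw [h1]
    exact hadj ⟨j % m, Nat.mod_lt _ hmpos⟩
  have hmod1 : ∀ i : ℕ, i < m → (1+i) % m = if i + 1 = m then 0 else i+1 := by
    intro i hi
    rcases Nat.lt_or_ge (1+i) m with h | h
    · rw [Nat.mod_eq_of_lt h, if_neg (by omega)]; omega
    · have h2 : 1 + i = m := by omega
      rw [h2, Nat.mod_self, if_pos (by omega)]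
  have hend : d (1 + (m-1)) = d 0 :=
    hdmod _ _ (by rw [show 1 + (m-1) = m by omega, Nat.mod_self, Nat.zero_mod])
  let q : G.Walk (d 1) (d 0) := (chainAux G d hd (m-1) 1).copy rfl hend
  have hqsupp : q.support = (List.range m).map (fun i => d (1+i)) := by
    show ((chainAux G d hd (m-1) 1).copy rfl hend).support = _
    rw [Walk.support_copy, chainAux_support, show m - 1 + 1 = m by omega]
  have hqnodup : q.support.Nodup := by
    rw [hqsupp]
    refine List.Nodup.map_on ?_ (List.nodup_range (n := m))
    intro i hi i' hi' hEq
    rw [List.mem_range] at hi hi'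
    have h := hdinj _ _ hEq
    rw [hmod1 i hi, hmod1 i' hi'] at h
    split_ifs at h <;> omega
  let p : G.Walk (d 0) (d 0) := Walk.cons (hd 0) q
  refine ⟨d 0, p, ?_⟩
  rw [Walk.isHamiltonianCycle_iff_isCycle_and_support_count_tail_eq_one]
  constructor
  · rw [Walk.cons_isCycle_iff]
    constructor
    · rw [Walk.isPath_def]; exact hqnodup
    · intro hmem
      have hqedges : q.edges = (List.range (m-1)).map (fun i => s(d (1+i), d (1+i+1))) := by
        show ((chainAux G d hd (m-1) 1).copy rfl hend).edges = _
        rw [Walk.edges_copy, chainAux_edges]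
      rw [hqedges, List.mem_map] at hmem
      obtain ⟨i, hi, hEq⟩ := hmem
      rw [List.mem_range] at hi
      rw [Sym2.eq_iff] at hEq
      rcases hEq with ⟨h1, h2⟩ | ⟨h1, h2⟩ <;>
      · have e1 := hdinj _ _ h1
        have e2 := hdinj _ _ h2
        simp only [show (1:ℕ)+i+1 = 1+(i+1) from by omega, hmod1 i (by omega),
          hmod1 (i+1) (by omega), Nat.zero_add, Nat.zero_mod,
          Nat.mod_eq_of_lt (show (1:ℕ) < m by omega)] at e1 e2
        split_ifs at e1 e2 <;> omega
  · intro a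
    have hsupp : p.support.tail = q.support := by
      show (Walk.cons (hd 0) q).support.tail = q.support
      rw [Walk.support_cons]
      rfl
    rw [hsupp]
    refine List.count_eq_one_of_mem hqnodup ?_
    rw [hqsupp, List.mem_map]
    obtain ⟨k, hk⟩ := hsurj a
    refine ⟨(k.val + m - 1) % m, ?_, ?_⟩
    · rw [List.mem_range]; exact Nat.mod_lt _ hmpos
    · rw [← hk]
      show d (1 + (k.val + m - 1) % m) = c k
      have h1 : (1 + (k.val + m - 1) % m) % m = k.val := by
        have e1 : 1 + (k.val + m - 1) = k.val + m := by omega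
        calc (1 + (k.val + m - 1) % m) % m
            = (1 % m + (k.val + m - 1) % m) % m := by
              rw [Nat.mod_eq_of_lt (by omega : 1 < m)]
          _ = (1 + (k.val + m - 1)) % m := (Nat.add_mod _ _ _).symm
          _ = (k.val + m) % m := by rw [e1]
          _ = k.val % m := Nat.add_mod_right _ _
          _ = k.val := Nat.mod_eq_of_lt k.isLt
      simp only [hd_def]
      apply congrArg; apply Fin.ext
      simpa using h1
end CycleLemma



lemma exists_perm_extend {n k : ℕ} (hk : k ≤ n) (f : Fin k → Fin n)
    (hf : Function.Injective f) :
    ∃ e : Equiv.Perm (Fin n), ∀ i : Fin k, e ⟨i.val, lt_of_lt_of_le i.isLt hk⟩ = f i := by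
  induction k with
  | zero => exact ⟨Equiv.refl _, fun i => i.elim0⟩
  | succ k ih =>
      obtain ⟨e, he⟩ := ih (by omega) (fun i => f i.castSucc)
        (fun a b hab => by
          have := hf hab
          exact Fin.castSucc_injective _ this)
      refine ⟨e.trans (Equiv.swap (e ⟨k, by omega⟩) (f ⟨k, by omega⟩)), ?_⟩
      intro i
      rcases Nat.lt_or_ge i.val k with hik | hik
      · have h1 : (⟨i.val, lt_of_lt_of_le i.isLt (by omega)⟩ : Fin n)
            = ⟨(⟨i.val, hik⟩ : Fin k).val, lt_of_lt_of_le (⟨i.val, hik⟩ : Fin k).isLt (by omega)⟩ := rfl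
      -- e value
        have h2 : e ⟨i.val, lt_of_lt_of_le i.isLt (by omega)⟩ = f (Fin.castSucc ⟨i.val, hik⟩) := by
          rw [h1]; exact he ⟨i.val, hik⟩
        have hcast : Fin.castSucc (⟨i.val, hik⟩ : Fin k) = i := by
          apply Fin.ext; simp
        simp only [Equiv.trans_apply, h2, hcast]
        apply Equiv.swap_apply_of_ne_of_ne
        · rw [← hcast, ← h2]
          intro hEq
          have := e.injective hEq
          have := congrArg Fin.val this
          simp at this
          omega
        · intro hEq
          have := hf hEq
          have := congrArg Fin.val this
          simp at this
          omega
      · have hik' : i.val = k := by omega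
        have hi : (⟨i.val, lt_of_lt_of_le i.isLt (by omega)⟩ : Fin n) = ⟨k, by omega⟩ := by
          apply Fin.ext; simp [hik']
        have hfi : f i = f ⟨k, by omega⟩ := by
          congr 1; apply Fin.ext; simp [hik']
        rw [hfi]
        simp only [Equiv.trans_apply, hi]
        exact Equiv.swap_apply_left _ _

lemma exists_fresh {n : ℕ} (s : Finset (Fin n)) (h : s.card < n) : ∃ z, z ∉ s := by
  by_contra hc
  push_neg at hc
  have : s = Finset.univ := Finset.eq_univ_iff_forall.mpr hc
  rw [this, Finset.card_univ, Fintype.card_fin] at h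
  omega

lemma isolated_unreachable {V : Type*} (G : SimpleGraph V) (S : Set V)
    {v w : V} (hv : v ∈ Sᶜ) (hw : w ∈ Sᶜ)
    (hiso : ∀ x, G.Adj v x → x ∈ S) (hne : v ≠ w) :
    ¬ (SimpleGraph.induce Sᶜ G).Reachable ⟨v, hv⟩ ⟨w, hw⟩ := by
  intro h
  obtain ⟨p⟩ := h
  have hnn : ¬ p.Nil := by
    apply Walk.not_nil_of_ne
    intro hEq
    exact hne (congrArg Subtype.val hEq)
  have hadj := p.adj_snd hnn
  have hGadj : G.Adj v (p.getVert 1).val := hadj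
  exact (p.getVert 1).prop (hiso _ hGadj)

lemma tough_kill {n : ℕ} (H : SimpleGraph (Fin n ⊕ Fin n))
    (htough : BTough1 H (Set.range Sum.inl) (Set.range Sum.inr))
    (S : Set (Fin n ⊕ Fin n)) (hS : S ⊂ Set.range Sum.inl)
    (k : ℕ) (hk : 2 ≤ k) (hcard : S.ncard = k)
    (x : Fin (k+1) → Fin n ⊕ Fin n) (hxS : ∀ i, x i ∈ Sᶜ)
    (hsep : ∀ i j, i ≠ j →
      ¬ (SimpleGraph.induce Sᶜ H).Reachable ⟨x i, hxS i⟩ ⟨x j, hxS j⟩) : False := by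
  have hcomp : k + 1 ≤ numComp H S := by
    have hinj : Function.Injective
        (fun i => (SimpleGraph.induce Sᶜ H).connectedComponentMk ⟨x i, hxS i⟩) := by
      intro i j hij
      by_contra hne
      exact hsep i j hne (SimpleGraph.ConnectedComponent.exact hij)
    calc k+1 = Nat.card (Fin (k+1)) := by simp
      _ ≤ _ := Nat.card_le_card_of_injective _ hinj
  have := htough S (Or.inl hS) (by omega)
  rw [hcard] at this
  omega

lemma hamCore {n : ℕ} (hn : 16 ≤ n) (H : SimpleGraph (Fin n ⊕ Fin n))
    (hcomp : ∀ i j : Fin n, 3 ≤ (j : ℕ) → H.Adj (Sum.inl i) (Sum.inr j))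
    (p : Fin 3 → Fin n) (hpinj : Function.Injective p) (hplt : ∀ i, (p i : ℕ) < 3)
    (x : Fin 6 → Fin n) (hxinj : Function.Injective x)
    (g : Fin 3 → Fin 5) (hginj : Function.Injective g)
    (hadj1 : ∀ i, H.Adj (Sum.inl (x (g i).castSucc)) (Sum.inr (p i)))
    (hadj2 : ∀ i, H.Adj (Sum.inl (x (g i).succ)) (Sum.inr (p i))) :
    H.IsHamiltonian := by
  obtain ⟨c, hc⟩ := exists_perm_extend (by omega : 6 ≤ n) x hxinj
  obtain ⟨α, hα⟩ := exists_perm_extend (by omega : 3 ≤ n)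
      (fun i => (⟨(g i).val, by have := (g i).isLt; omega⟩ : Fin n))
      (fun a b hab => hginj (Fin.ext (by simpa using congrArg Fin.val hab)))
  obtain ⟨β, hβ⟩ := exists_perm_extend (by omega : 3 ≤ n) p hpinj
  set τ : Equiv.Perm (Fin n) := α.symm.trans β with hτdef
  have hτg : ∀ i : Fin 3, ∀ (h : ((g i).val : ℕ) < n), τ ⟨(g i).val, h⟩ = p i := by
    intro i h
    have h1 : α.symm ⟨(g i).val, h⟩ = ⟨i.val, by omega⟩ := by
      apply α.injective
      rw [Equiv.apply_symm_apply]
      exact (hα i).symm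
    simp only [hτdef, Equiv.trans_apply, h1]
    exact hβ i
  have hτge : ∀ t : Fin n, (∀ i : Fin 3, t.val ≠ (g i).val) → 3 ≤ (τ t).val := by
    intro t ht
    by_contra hlt
    push_neg at hlt
    have hsurj3 : ∃ i : Fin 3, p i = τ t := by
      by_contra hno
      push_neg at hno
      have himage : (Finset.univ.image p) ⊆
          Finset.univ.filter (fun y : Fin n => y.val < 3) := by
        intro y hy
        simp only [Finset.mem_image] at hy
        obtain ⟨i, _, rfl⟩ := hy
        simp only [Finset.mem_filter, Finset.mem_univ, true_and]
        exact hplt i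
      have hcard1 : (Finset.univ.image p).card = 3 := by
        rw [Finset.card_image_of_injective _ hpinj]
        simp
      have hcard2 : (Finset.univ.filter (fun y : Fin n => y.val < 3)).card ≤ 3 := by
        have := Finset.card_le_card_of_injOn (f := fun y : Fin n => y.val)
          (s := Finset.univ.filter (fun y : Fin n => y.val < 3)) (t := Finset.range 3)
          (fun a ha => by
            simp at ha
            exact Finset.mem_range.mpr ha)
          (fun a _ b _ hab => Fin.ext hab)
        simpa using this
      have heq : (Finset.univ.image p)
          = Finset.univ.filter (fun y : Fin n => y.val < 3) :=
        Finset.eq_of_subset_of_card_le himage (by omega)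
      have hmem : τ t ∈ Finset.univ.image p := by
        rw [heq]; simp [hlt]
      simp only [Finset.mem_image] at hmem
      obtain ⟨i, _, hi⟩ := hmem
      exact hno i hi
    obtain ⟨i, hi⟩ := hsurj3
    have h2 : α.symm t = ⟨i.val, by omega⟩ := by
      apply β.injective
      rw [← hβ i] at hi
      exact (hi.symm : β (α.symm t) = _) ▸ rfl
    have h3 : t = α ⟨i.val, by omega⟩ := by
      rw [← h2, Equiv.apply_symm_apply]
    rw [hα i] at h3
    exact ht i (by rw [h3])
  -- the cyclic function
  refine isHamiltonian_of_cycleFn (m := 2*n) (by omega)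
    (fun s => if s.val % 2 = 0
      then Sum.inl (c ⟨s.val / 2, by have := s.isLt; omega⟩)
      else Sum.inr (τ ⟨s.val / 2, by have := s.isLt; omega⟩)) ?_ ?_ ?_
  · -- injective
    intro s t hst
    dsimp only at hst
    by_cases hs : s.val % 2 = 0 <;> by_cases ht : t.val % 2 = 0
    · rw [if_pos hs, if_pos ht] at hst
      have := c.injective (Sum.inl.inj hst)
      have := congrArg Fin.val this
      apply Fin.ext
      have hs2 := s.isLt; have ht2 := t.isLt
      simp only at this
      omega
    · rw [if_pos hs, if_neg ht] at hst; exact absurd hst (by simp)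
    · rw [if_neg hs, if_pos ht] at hst; exact absurd hst (by simp)
    · rw [if_neg hs, if_neg ht] at hst
      have := τ.injective (Sum.inr.inj hst)
      have := congrArg Fin.val this
      apply Fin.ext
      have hs2 := s.isLt; have ht2 := t.isLt
      simp only at this
      omega
  · -- surjective
    intro v
    rcases v with a | b
    ·   refine ⟨⟨2 * (c.symm a).val, by have := (c.symm a).isLt; omega⟩, ?_⟩
        dsimp only
        rw [if_pos (by omega : (2 * (c.symm a).val) % 2 = 0)]
        congr 1
        have hidx : (⟨2 * (c.symm a).val / 2, by have := (c.symm a).isLt; omega⟩ : Fin n)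
            = c.symm a := Fin.ext (by show 2 * (c.symm a).val / 2 = (c.symm a).val; omega)
        rw [hidx, Equiv.apply_symm_apply]
    ·   refine ⟨⟨2 * (τ.symm b).val + 1, by have := (τ.symm b).isLt; omega⟩, ?_⟩
        dsimp only
        rw [if_neg (by omega : ¬ (2 * (τ.symm b).val + 1) % 2 = 0)]
        congr 1
        have hidx : (⟨(2 * (τ.symm b).val + 1) / 2, by have := (τ.symm b).isLt; omega⟩ : Fin n)
            = τ.symm b := Fin.ext (by show (2 * (τ.symm b).val + 1) / 2 = (τ.symm b).val; omega)
        rw [hidx, Equiv.apply_symm_apply]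
  · -- adjacency
    intro s
    have hslt := s.isLt
    dsimp only
    by_cases hpar : s.val % 2 = 0
    · -- even position: inl (c q) to inr (τ q)
      have hlt : s.val + 1 < 2*n := by omega
      have hmod : (s.val + 1) % (2*n) = s.val + 1 := Nat.mod_eq_of_lt hlt
      rw [if_pos hpar, if_neg (by rw [hmod]; omega)]
      have hstep : (τ ⟨(s.val+1) % (2*n) / 2,
            by have : (s.val+1) % (2*n) < 2*n := Nat.mod_lt _ (by omega); omega⟩ : Fin n)
          = τ ⟨s.val/2, by omega⟩ :=
        congrArg τ (Fin.ext (by show (s.val+1) % (2*n) / 2 = s.val / 2; rw [hmod]; omega))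
      rw [hstep]
      by_cases hgap : ∃ i : Fin 3, s.val / 2 = (g i).val
      · obtain ⟨i, hi⟩ := hgap
        have hcq : ∀ (hh : s.val/2 < n), c ⟨s.val/2, hh⟩ = x (g i).castSucc := by
          intro hh
          have h1 : (⟨s.val/2, hh⟩ : Fin n)
              = ⟨((g i).castSucc : Fin 6).val, by have := (g i).isLt; omega⟩ :=
            Fin.ext (by simp [hi])
          rw [h1]; exact hc _
        have hτq : ∀ (hh : s.val/2 < n), τ ⟨s.val/2, hh⟩ = p i := by
          intro hh
          have h2 : (⟨s.val/2, hh⟩ : Fin n) = ⟨(g i).val, by have := (g i).isLt; omega⟩ :=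
            Fin.ext hi
          rw [h2]; exact hτg i _
        rw [hcq, hτq]
        exact hadj1 i
      · push_neg at hgap
        refine hcomp _ _ (hτge _ ?_)
        intro i
        exact hgap i
    · -- odd position
      have hodd : s.val % 2 = 1 := by omega
      rw [if_neg hpar]
      by_cases hlast : s.val = 2*n - 1
      · have hmod : (s.val + 1) % (2*n) = 0 := by
          rw [show s.val + 1 = 2*n from by omega, Nat.mod_self]
        rw [if_pos (show ((s.val+1) % (2*n)) % 2 = 0 by rw [hmod])]
        refine (hcomp _ _ (hτge _ fun i => ?_)).symm
        show ¬ s.val / 2 = (g i).val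
        have := (g i).isLt
        omega
      · have hlt2 : s.val + 1 < 2*n := by omega
        have hmod : (s.val + 1) % (2*n) = s.val + 1 := Nat.mod_eq_of_lt hlt2
        rw [if_pos (show ((s.val+1) % (2*n)) % 2 = 0 by rw [hmod]; omega)]
        have hstep : (c ⟨(s.val+1) % (2*n) / 2,
              by have : (s.val+1) % (2*n) < 2*n := Nat.mod_lt _ (by omega); omega⟩ : Fin n)
            = c ⟨s.val/2 + 1, by omega⟩ :=
          congrArg c (Fin.ext (by show (s.val+1) % (2*n) / 2 = s.val / 2 + 1; rw [hmod]; omega))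
        rw [hstep]
        by_cases hgap : ∃ i : Fin 3, s.val / 2 = (g i).val
        · obtain ⟨i, hi⟩ := hgap
          have hcq : ∀ (hh : s.val/2 + 1 < n), c ⟨s.val/2 + 1, hh⟩ = x (g i).succ := by
            intro hh
            have h1 : (⟨s.val/2 + 1, hh⟩ : Fin n)
                = ⟨((g i).succ : Fin 6).val, by have := (g i).isLt; omega⟩ :=
              Fin.ext (by simp [Fin.val_succ, hi])
            rw [h1]; exact hc _
          have hτq : ∀ (hh : s.val/2 < n), τ ⟨s.val/2, hh⟩ = p i := by
            intro hh
            have h2 : (⟨s.val/2, hh⟩ : Fin n) = ⟨(g i).val, by have := (g i).isLt; omega⟩ :=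
              Fin.ext hi
            rw [h2]; exact hτg i _
          rw [hcq, hτq]
          exact (hadj2 i).symm
        · push_neg at hgap
          exact (hcomp _ _ (hτge _ fun i => hgap i)).symm

lemma kill2 {n : ℕ} (hn : 16 ≤ n) (H : SimpleGraph (Fin n ⊕ Fin n))
    (htough : BTough1 H (Set.range Sum.inl) (Set.range Sum.inr))
    (s1 s2 : Fin n) (hs : s1 ≠ s2) (j1 j2 : Fin n) (hj : j1 ≠ j2)
    (hN1 : H.neighborSet (Sum.inr j1) ⊆ {Sum.inl s1, Sum.inl s2})
    (hN2 : H.neighborSet (Sum.inr j2) ⊆ {Sum.inl s1, Sum.inl s2}) : False := by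
  classical
  obtain ⟨z, hz⟩ := exists_fresh {s1, s2} (lt_of_le_of_lt (Finset.card_insert_le _ _)
    (by simp; omega))
  simp only [Finset.mem_insert, Finset.mem_singleton, not_or] at hz
  set S : Set (Fin n ⊕ Fin n) := {Sum.inl s1, Sum.inl s2} with hS
  have hiso1 : ∀ y, H.Adj (Sum.inr j1) y → y ∈ S := fun y hy => hN1 hy
  have hiso2 : ∀ y, H.Adj (Sum.inr j2) y → y ∈ S := fun y hy => hN2 hy
  have h1S : (Sum.inr j1 : Fin n ⊕ Fin n) ∈ Sᶜ := by simp [hS]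
  have h2S : (Sum.inr j2 : Fin n ⊕ Fin n) ∈ Sᶜ := by simp [hS]
  have h3S : (Sum.inl z : Fin n ⊕ Fin n) ∈ Sᶜ := by simp [hS, hz.1, hz.2]
  have hSsub : S ⊂ Set.range Sum.inl := by
    rw [Set.ssubset_iff_of_subset (by rintro w (rfl | rfl) <;> simp)]
    exact ⟨Sum.inl z, ⟨z, rfl⟩, by simp [hS, hz.1, hz.2]⟩
  refine tough_kill H htough S hSsub 2 le_rfl (Set.ncard_pair (by simp [hs]))
    (fun i => if i.val = 0 then Sum.inr j1 else if i.val = 1 then Sum.inr j2 else Sum.inl z)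
    (fun i => by
      rcases i with ⟨iv, hiv⟩
      interval_cases iv <;> simpa using (by assumption)) ?_
  intro i j hij
  rcases i with ⟨iv, hiv⟩; rcases j with ⟨jv, hjv⟩
  have hij' : iv ≠ jv := fun h => hij (Fin.ext h)
  interval_cases iv <;> interval_cases jv <;> simp only [] <;> first
    | omega
    | exact isolated_unreachable H S _ _ hiso1 (by simp [hj])
    | exact isolated_unreachable H S _ _ hiso2 (by simp [hj.symm])
    | exact isolated_unreachable H S _ _ hiso1 (by simp)
    | exact isolated_unreachable H S _ _ hiso2 (by simp)
    | exact fun h => isolated_unreachable H S _ _ hiso1 (by simp) h.symm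
    | exact fun h => isolated_unreachable H S _ _ hiso2 (by simp) h.symm

lemma kill3 {n : ℕ} (hn : 16 ≤ n) (H : SimpleGraph (Fin n ⊕ Fin n))
    (htough : BTough1 H (Set.range Sum.inl) (Set.range Sum.inr))
    (s1 s2 s3 : Fin n) (hs12 : s1 ≠ s2) (hs13 : s1 ≠ s3) (hs23 : s2 ≠ s3)
    (j1 j2 j3 : Fin n) (hj12 : j1 ≠ j2) (hj13 : j1 ≠ j3) (hj23 : j2 ≠ j3)
    (hN1 : H.neighborSet (Sum.inr j1) ⊆ {Sum.inl s1, Sum.inl s2, Sum.inl s3})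
    (hN2 : H.neighborSet (Sum.inr j2) ⊆ {Sum.inl s1, Sum.inl s2, Sum.inl s3})
    (hN3 : H.neighborSet (Sum.inr j3) ⊆ {Sum.inl s1, Sum.inl s2, Sum.inl s3}) : False := by
  classical
  obtain ⟨z, hz⟩ := exists_fresh {s1, s2, s3} (lt_of_le_of_lt (Finset.card_insert_le _ _)
    (by
      have := Finset.card_insert_le s2 ({s3} : Finset (Fin n))
      simp at this ⊢
      omega))
  simp only [Finset.mem_insert, Finset.mem_singleton, not_or] at hz
  set S : Set (Fin n ⊕ Fin n) := {Sum.inl s1, Sum.inl s2, Sum.inl s3} with hS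
  have hiso1 : ∀ y, H.Adj (Sum.inr j1) y → y ∈ S := fun y hy => hN1 hy
  have hiso2 : ∀ y, H.Adj (Sum.inr j2) y → y ∈ S := fun y hy => hN2 hy
  have hiso3 : ∀ y, H.Adj (Sum.inr j3) y → y ∈ S := fun y hy => hN3 hy
  have h1S : (Sum.inr j1 : Fin n ⊕ Fin n) ∈ Sᶜ := by simp [hS]
  have h2S : (Sum.inr j2 : Fin n ⊕ Fin n) ∈ Sᶜ := by simp [hS]
  have h3S : (Sum.inr j3 : Fin n ⊕ Fin n) ∈ Sᶜ := by simp [hS]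
  have h4S : (Sum.inl z : Fin n ⊕ Fin n) ∈ Sᶜ := by simp [hS, hz.1, hz.2.1, hz.2.2]
  have hSsub : S ⊂ Set.range Sum.inl := by
    rw [Set.ssubset_iff_of_subset (by rintro w (rfl | rfl | rfl) <;> simp)]
    exact ⟨Sum.inl z, ⟨z, rfl⟩, by simp [hS, hz.1, hz.2.1, hz.2.2]⟩
  have hcard : S.ncard = 3 := by
    rw [hS, Set.ncard_insert_of_notMem (by simp [hs12, hs13]),
      Set.ncard_pair (by simp [hs23])]
  refine tough_kill H htough S hSsub 3 (by omega) hcard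
    (fun i => if i.val = 0 then Sum.inr j1 else if i.val = 1 then Sum.inr j2
      else if i.val = 2 then Sum.inr j3 else Sum.inl z)
    (fun i => by
      rcases i with ⟨iv, hiv⟩
      interval_cases iv <;> simpa using (by assumption)) ?_
  intro i j hij
  rcases i with ⟨iv, hiv⟩; rcases j with ⟨jv, hjv⟩
  have hij' : iv ≠ jv := fun h => hij (Fin.ext h)
  interval_cases iv <;> interval_cases jv <;> simp only [] <;> first
    | omega
    | exact isolated_unreachable H S _ _ hiso1 (by simp [hj12, hj13])
    | exact isolated_unreachable H S _ _ hiso2 (by simp [hj12.symm, hj23])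
    | exact isolated_unreachable H S _ _ hiso3 (by simp [hj13.symm, hj23.symm])
    | exact isolated_unreachable H S _ _ hiso1 (by simp)
    | exact isolated_unreachable H S _ _ hiso2 (by simp)
    | exact isolated_unreachable H S _ _ hiso3 (by simp)
    | exact fun h => isolated_unreachable H S _ _ hiso1 (by simp) h.symm
    | exact fun h => isolated_unreachable H S _ _ hiso2 (by simp) h.symm
    | exact fun h => isolated_unreachable H S _ _ hiso3 (by simp) h.symm

def sel3 {γ : Type*} (a b c : γ) : Fin 3 → γ :=
  fun k => if k.val = 0 then a else if k.val = 1 then b else c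

def sel6 {γ : Type*} (a b c d e f : γ) : Fin 6 → γ :=
  fun k => if k.val = 0 then a else if k.val = 1 then b else if k.val = 2 then c
    else if k.val = 3 then d else if k.val = 4 then e else f

lemma sel3_injective {γ : Type*} {a b c : γ} (h1 : a ≠ b) (h2 : a ≠ c) (h3 : b ≠ c) :
    Function.Injective (sel3 a b c) := by
  intro i j h
  rcases i with ⟨iv, hiv⟩; rcases j with ⟨jv, hjv⟩
  apply Fin.ext
  interval_cases iv <;> interval_cases jv <;> simp_all [sel3]

lemma sel6_injective {γ : Type*} {a b c d e f : γ}
    (h1 : a ≠ b) (h2 : a ≠ c) (h3 : a ≠ d) (h4 : a ≠ e) (h5 : a ≠ f)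
    (h6 : b ≠ c) (h7 : b ≠ d) (h8 : b ≠ e) (h9 : b ≠ f)
    (h10 : c ≠ d) (h11 : c ≠ e) (h12 : c ≠ f)
    (h13 : d ≠ e) (h14 : d ≠ f) (h15 : e ≠ f) :
    Function.Injective (sel6 a b c d e f) := by
  intro i j h
  rcases i with ⟨iv, hiv⟩; rcases j with ⟨jv, hjv⟩
  apply Fin.ext
  interval_cases iv <;> interval_cases jv <;> simp_all [sel6]

lemma hamA {n : ℕ} (hn : 16 ≤ n) (H : SimpleGraph (Fin n ⊕ Fin n))
    (hcomp : ∀ i j : Fin n, 3 ≤ (j : ℕ) → H.Adj (Sum.inl i) (Sum.inr j))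
    (pa pb pc : Fin n) (hpa : (pa:ℕ) < 3) (hpb : (pb:ℕ) < 3) (hpc : (pc:ℕ) < 3)
    (hpab : pa ≠ pb) (hpac : pa ≠ pc) (hpbc : pb ≠ pc)
    (x0 x1 x2 x3 x4 x5 : Fin n)
    (hxinj : Function.Injective (sel6 x0 x1 x2 x3 x4 x5))
    (hA1 : H.Adj (Sum.inl x0) (Sum.inr pa)) (hA2 : H.Adj (Sum.inl x1) (Sum.inr pa))
    (hB1 : H.Adj (Sum.inl x2) (Sum.inr pb)) (hB2 : H.Adj (Sum.inl x3) (Sum.inr pb))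
    (hC1 : H.Adj (Sum.inl x4) (Sum.inr pc)) (hC2 : H.Adj (Sum.inl x5) (Sum.inr pc)) :
    H.IsHamiltonian := by
  refine hamCore hn H hcomp (sel3 pa pb pc)
    (sel3_injective hpab hpac hpbc)
    (fun i => by rcases i with ⟨iv,hiv⟩; interval_cases iv <;> simpa [sel3] using (by assumption))
    (sel6 x0 x1 x2 x3 x4 x5) hxinj
    (sel3 (0 : Fin 5) 2 4) (by decide) ?_ ?_ <;>
  · intro i
    rcases i with ⟨iv, hiv⟩
    interval_cases iv <;>
      simpa [sel3, sel6, Fin.castSucc, Fin.succ, Fin.castAdd, Fin.castLE] using (by assumption)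

lemma hamB {n : ℕ} (hn : 16 ≤ n) (H : SimpleGraph (Fin n ⊕ Fin n))
    (hcomp : ∀ i j : Fin n, 3 ≤ (j : ℕ) → H.Adj (Sum.inl i) (Sum.inr j))
    (pa pb pc : Fin n) (hpa : (pa:ℕ) < 3) (hpb : (pb:ℕ) < 3) (hpc : (pc:ℕ) < 3)
    (hpab : pa ≠ pb) (hpac : pa ≠ pc) (hpbc : pb ≠ pc)
    (x0 x1 x2 x3 x4 x5 : Fin n)
    (hxinj : Function.Injective (sel6 x0 x1 x2 x3 x4 x5))
    (hA1 : H.Adj (Sum.inl x0) (Sum.inr pa)) (hA2 : H.Adj (Sum.inl x1) (Sum.inr pa))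
    (hB1 : H.Adj (Sum.inl x1) (Sum.inr pb)) (hB2 : H.Adj (Sum.inl x2) (Sum.inr pb))
    (hC1 : H.Adj (Sum.inl x3) (Sum.inr pc)) (hC2 : H.Adj (Sum.inl x4) (Sum.inr pc)) :
    H.IsHamiltonian := by
  refine hamCore hn H hcomp (sel3 pa pb pc)
    (sel3_injective hpab hpac hpbc)
    (fun i => by rcases i with ⟨iv,hiv⟩; interval_cases iv <;> simpa [sel3] using (by assumption))
    (sel6 x0 x1 x2 x3 x4 x5) hxinj
    (sel3 (0 : Fin 5) 1 3) (by decide) ?_ ?_ <;>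
  · intro i
    rcases i with ⟨iv, hiv⟩
    interval_cases iv <;>
      simpa [sel3, sel6, Fin.castSucc, Fin.succ, Fin.castAdd, Fin.castLE] using (by assumption)

lemma hamC {n : ℕ} (hn : 16 ≤ n) (H : SimpleGraph (Fin n ⊕ Fin n))
    (hcomp : ∀ i j : Fin n, 3 ≤ (j : ℕ) → H.Adj (Sum.inl i) (Sum.inr j))
    (pa pb pc : Fin n) (hpa : (pa:ℕ) < 3) (hpb : (pb:ℕ) < 3) (hpc : (pc:ℕ) < 3)
    (hpab : pa ≠ pb) (hpac : pa ≠ pc) (hpbc : pb ≠ pc)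
    (x0 x1 x2 x3 x4 x5 : Fin n)
    (hxinj : Function.Injective (sel6 x0 x1 x2 x3 x4 x5))
    (hA1 : H.Adj (Sum.inl x0) (Sum.inr pa)) (hA2 : H.Adj (Sum.inl x1) (Sum.inr pa))
    (hB1 : H.Adj (Sum.inl x1) (Sum.inr pb)) (hB2 : H.Adj (Sum.inl x2) (Sum.inr pb))
    (hC1 : H.Adj (Sum.inl x2) (Sum.inr pc)) (hC2 : H.Adj (Sum.inl x3) (Sum.inr pc)) :
    H.IsHamiltonian := by
  refine hamCore hn H hcomp (sel3 pa pb pc)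
    (sel3_injective hpab hpac hpbc)
    (fun i => by rcases i with ⟨iv,hiv⟩; interval_cases iv <;> simpa [sel3] using (by assumption))
    (sel6 x0 x1 x2 x3 x4 x5) hxinj
    (sel3 (0 : Fin 5) 1 2) (by decide) ?_ ?_ <;>
  · intro i
    rcases i with ⟨iv, hiv⟩
    interval_cases iv <;>
      simpa [sel3, sel6, Fin.castSucc, Fin.succ, Fin.castAdd, Fin.castLE] using (by assumption)

lemma shared_of {n : ℕ} {a b a' b' : Fin n} (h : a = a' ∨ a = b' ∨ b = a' ∨ b = b') :
    ∃ s, (s = a ∨ s = b) ∧ (s = a' ∨ s = b') := by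
  rcases h with h|h|h|h
  · exact ⟨a, Or.inl rfl, Or.inl h⟩
  · exact ⟨a, Or.inl rfl, Or.inr h⟩
  · exact ⟨b, Or.inr rfl, Or.inl h⟩
  · exact ⟨b, Or.inr rfl, Or.inr h⟩

lemma other_end {n : ℕ} {a b s : Fin n} (hab : a ≠ b) (hs : s = a ∨ s = b) :
    ∃ xx, (xx = a ∨ xx = b) ∧ xx ≠ s := by
  rcases hs with rfl | rfl
  · exact ⟨b, Or.inr rfl, fun h => hab h.symm⟩
  · exact ⟨a, Or.inl rfl, hab⟩

lemma mem_flip {n : ℕ} {a b s t : Fin n} (hst : s ≠ t)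
    (hs : s = a ∨ s = b) (ht : t = a ∨ t = b) : (a = s ∨ a = t) ∧ (b = s ∨ b = t) := by
  rcases hs with rfl|rfl <;> rcases ht with rfl|rfl <;> tauto

lemma disj_ne {n : ℕ} {a b a' b' u v : Fin n}
    (hI : ¬(a = a' ∨ a = b' ∨ b = a' ∨ b = b'))
    (hu : u = a ∨ u = b) (hv : v = a' ∨ v = b') : u ≠ v := by
  push_neg at hI
  rcases hu with rfl|rfl <;> rcases hv with rfl|rfl <;> tauto

lemma nbr_subset2 {n : ℕ} {H : SimpleGraph (Fin n ⊕ Fin n)} {j a b s t : Fin n}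
    (hN : H.neighborSet (Sum.inr j) = {Sum.inl a, Sum.inl b})
    (ha : a = s ∨ a = t) (hb : b = s ∨ b = t) :
    H.neighborSet (Sum.inr j) ⊆ ({Sum.inl s, Sum.inl t} : Set (Fin n ⊕ Fin n)) := by
  rw [hN]
  intro zz hzz
  simp only [Set.mem_insert_iff, Set.mem_singleton_iff] at hzz ⊢
  rcases hzz with rfl | rfl
  · rcases ha with rfl|rfl
    exacts [Or.inl rfl, Or.inr rfl]
  · rcases hb with rfl|rfl
    exacts [Or.inl rfl, Or.inr rfl]

lemma nbr_subset3 {n : ℕ} {H : SimpleGraph (Fin n ⊕ Fin n)} {j a b s t r : Fin n}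
    (hN : H.neighborSet (Sum.inr j) = {Sum.inl a, Sum.inl b})
    (ha : a = s ∨ a = t ∨ a = r) (hb : b = s ∨ b = t ∨ b = r) :
    H.neighborSet (Sum.inr j) ⊆ ({Sum.inl s, Sum.inl t, Sum.inl r} : Set (Fin n ⊕ Fin n)) := by
  rw [hN]
  intro zz hzz
  simp only [Set.mem_insert_iff, Set.mem_singleton_iff] at hzz ⊢
  rcases hzz with rfl | rfl
  · rcases ha with rfl|rfl|rfl
    exacts [Or.inl rfl, Or.inr (Or.inl rfl), Or.inr (Or.inr rfl)]
  · rcases hb with rfl|rfl|rfl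
    exacts [Or.inl rfl, Or.inr (Or.inl rfl), Or.inr (Or.inr rfl)]

lemma fresh5 {n : ℕ} (hn : 16 ≤ n) (v1 v2 v3 v4 v5 : Fin n) :
    ∃ z, z ≠ v1 ∧ z ≠ v2 ∧ z ≠ v3 ∧ z ≠ v4 ∧ z ≠ v5 := by
  obtain ⟨z, hz⟩ := exists_fresh {v1,v2,v3,v4,v5} (by
    have h1 := Finset.card_insert_le v1 ({v2,v3,v4,v5} : Finset (Fin n))
    have h2 := Finset.card_insert_le v2 ({v3,v4,v5} : Finset (Fin n))
    have h3 := Finset.card_insert_le v3 ({v4,v5} : Finset (Fin n))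
    have h4 := Finset.card_insert_le v4 ({v5} : Finset (Fin n))
    have h5 : ({v5} : Finset (Fin n)).card = 1 := Finset.card_singleton v5
    omega)
  simp only [Finset.mem_insert, Finset.mem_singleton, not_or] at hz
  exact ⟨z, hz.1, hz.2.1, hz.2.2.1, hz.2.2.2.1, hz.2.2.2.2⟩

lemma gnn_adj_ll {n : ℕ} (i i' : Fin n) : ¬ (Gnn n).Adj (Sum.inl i) (Sum.inl i') := by
  simp [Gnn, SimpleGraph.fromRel_adj]

lemma gnn_adj_rr {n : ℕ} (j j' : Fin n) : ¬ (Gnn n).Adj (Sum.inr j) (Sum.inr j') := by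
  simp [Gnn, SimpleGraph.fromRel_adj]

lemma gnn_adj_lr {n : ℕ} (i j : Fin n) : (Gnn n).Adj (Sum.inl i) (Sum.inr j) ↔
    (3 ≤ (j:ℕ) ∨ ((j:ℕ) < 3 ∧ ((i:ℕ) = 0 ∨ (i:ℕ) = (j:ℕ)+1))) := by
  simp [Gnn, SimpleGraph.fromRel_adj]


set_option maxHeartbeats 2000000 in
/-- Let `n ≥ 16` and let `H` be balanced bipartite containing all edges
`u_i v_j` for `j ≥ 4`, with `d(vᵢ) = 2` for `i = 1, 2, 3`. If `H` has bipartite toughness at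
least `1` and no Hamilton cycle, then some `u ∈ X` is adjacent to all of `v₁, v₂, v₃`, their
second neighbors are pairwise distinct, and consequently `H ≅ G_{n,n}`. (Indices 0-based.) -/
theorem stmt16 (n : ℕ) (hn : 16 ≤ n) (H : SimpleGraph (Fin n ⊕ Fin n))
    (hbip : IsBipartition H (Set.range Sum.inl) (Set.range Sum.inr))
    (hcomp : ∀ i j : Fin n, 3 ≤ (j : ℕ) → H.Adj (Sum.inl i) (Sum.inr j))
    (hdeg : ∀ j : Fin n, (j : ℕ) < 3 → (H.neighborSet (Sum.inr j)).ncard = 2)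
    (htough : BTough1 H (Set.range Sum.inl) (Set.range Sum.inr))
    (hham : ¬ H.IsHamiltonian) :
    (∃ (u : Fin n) (w : Fin 3 → Fin n), Function.Injective w ∧ (∀ k : Fin 3, w k ≠ u) ∧
      ∀ (j : Fin n) (hj : (j : ℕ) < 3),
        H.neighborSet (Sum.inr j) = {Sum.inl u, Sum.inl (w ⟨(j : ℕ), hj⟩)}) ∧
    Nonempty (H ≃g Gnn n) := by
  classical
  -- basic bipartite facts
  have hnoXX : ∀ i i' : Fin n, ¬ H.Adj (Sum.inl i) (Sum.inl i') := by
    intro i i' h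
    rcases hbip.2.2 h with ⟨_, h2⟩ | ⟨h1, _⟩
    · obtain ⟨t, ht⟩ := h2; exact nomatch ht
    · obtain ⟨t, ht⟩ := h1; exact nomatch ht
  have hnoYY : ∀ j j' : Fin n, ¬ H.Adj (Sum.inr j) (Sum.inr j') := by
    intro j j' h
    rcases hbip.2.2 h with ⟨h1, _⟩ | ⟨_, h2⟩
    · obtain ⟨t, ht⟩ := h1; exact nomatch ht
    · obtain ⟨t, ht⟩ := h2; exact nomatch ht
  -- neighbors of right vertices are left vertices
  have hNX : ∀ (j : Fin n) (z : Fin n ⊕ Fin n), H.Adj (Sum.inr j) z → ∃ t, z = Sum.inl t := by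
    intro j z hz
    rcases hbip.2.2 hz with ⟨h1, _⟩ | ⟨_, h2⟩
    · obtain ⟨t, ht⟩ := h1; exact nomatch ht
    · obtain ⟨t, ht⟩ := h2; exact ⟨t, ht.symm⟩
  have hpair : ∀ (j : Fin n), (j:ℕ) < 3 → ∃ a b : Fin n, a ≠ b ∧
      H.neighborSet (Sum.inr j) = {Sum.inl a, Sum.inl b} := by
    intro j hj
    obtain ⟨z, w, hzw, hN⟩ := Set.ncard_eq_two.mp (hdeg j hj)
    obtain ⟨a, rfl⟩ := hNX j z (by
      have : z ∈ H.neighborSet (Sum.inr j) := by rw [hN]; simp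
      exact this)
    obtain ⟨b, rfl⟩ := hNX j w (by
      have : w ∈ H.neighborSet (Sum.inr j) := by rw [hN]; simp
      exact this)
    exact ⟨a, b, fun h => hzw (by rw [h]), hN⟩
  -- the three special right vertices
  set j0 : Fin n := ⟨0, by omega⟩ with hj0def
  set j1 : Fin n := ⟨1, by omega⟩ with hj1def
  set j2 : Fin n := ⟨2, by omega⟩ with hj2def
  have hj01 : j0 ≠ j1 := Fin.ne_of_val_ne (by norm_num)
  have hj02 : j0 ≠ j2 := Fin.ne_of_val_ne (by norm_num)
  have hj12 : j1 ≠ j2 := Fin.ne_of_val_ne (by norm_num)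
  obtain ⟨a0, b0, hab0, hN0⟩ := hpair j0 (by norm_num [hj0def])
  obtain ⟨a1, b1, hab1, hN1⟩ := hpair j1 (by norm_num [hj1def])
  obtain ⟨a2, b2, hab2, hN2⟩ := hpair j2 (by norm_num [hj2def])
  -- adjacency from membership in a neighbour pair
  have hadjmem : ∀ (j z a b : Fin n), H.neighborSet (Sum.inr j) = {Sum.inl a, Sum.inl b} →
      (z = a ∨ z = b) → H.Adj (Sum.inl z) (Sum.inr j) := by
    intro j z a b hN hz
    have hmem : Sum.inl z ∈ H.neighborSet (Sum.inr j) := by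
      rw [hN]; rcases hz with rfl|rfl <;> simp
    exact ((H.mem_neighborSet _ _).mp hmem).symm
  have hmemadj : ∀ (j z a b : Fin n), H.neighborSet (Sum.inr j) = {Sum.inl a, Sum.inl b} →
      H.Adj (Sum.inl z) (Sum.inr j) → (z = a ∨ z = b) := by
    intro j z a b hN hadj
    have hmem : Sum.inl z ∈ H.neighborSet (Sum.inr j) := (H.mem_neighborSet _ _).mpr hadj.symm
    rw [hN] at hmem
    simp only [Set.mem_insert_iff, Set.mem_singleton_iff, Sum.inl.injEq] at hmem
    exact hmem
  by_cases hcc : ∃ u : Fin n, (u = a0 ∨ u = b0) ∧ (u = a1 ∨ u = b1) ∧ (u = a2 ∨ u = b2)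
  · -- common neighbour case
    obtain ⟨u, hu0, hu1, hu2⟩ := hcc
    obtain ⟨w0, hw0mem, hw0ne⟩ := other_end hab0 (by tauto : u = a0 ∨ u = b0)
    obtain ⟨w1, hw1mem, hw1ne⟩ := other_end hab1 (by tauto : u = a1 ∨ u = b1)
    obtain ⟨w2, hw2mem, hw2ne⟩ := other_end hab2 (by tauto : u = a2 ∨ u = b2)
    -- rewrite neighborhoods
    have hN0' : H.neighborSet (Sum.inr j0) = {Sum.inl u, Sum.inl w0} := by
      rw [hN0]
      have := mem_flip (fun h => hw0ne h.symm) hu0 hw0mem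
      rcases this.1 with rfl|rfl <;> rcases this.2 with rfl|rfl <;>
        first | rfl | (exact Set.pair_comm _ _) | (exact absurd rfl hab0) |
          (exact absurd rfl (fun h => hw0ne rfl))
    have hN1' : H.neighborSet (Sum.inr j1) = {Sum.inl u, Sum.inl w1} := by
      rw [hN1]
      have := mem_flip (fun h => hw1ne h.symm) hu1 hw1mem
      rcases this.1 with rfl|rfl <;> rcases this.2 with rfl|rfl <;>
        first | rfl | (exact Set.pair_comm _ _) | (exact absurd rfl hab1) |
          (exact absurd rfl (fun h => hw1ne rfl))
    have hN2' : H.neighborSet (Sum.inr j2) = {Sum.inl u, Sum.inl w2} := by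
      rw [hN2]
      have := mem_flip (fun h => hw2ne h.symm) hu2 hw2mem
      rcases this.1 with rfl|rfl <;> rcases this.2 with rfl|rfl <;>
        first | rfl | (exact Set.pair_comm _ _) | (exact absurd rfl hab2) |
          (exact absurd rfl (fun h => hw2ne rfl))
    -- the second neighbours are pairwise distinct
    have hwne01 : w0 ≠ w1 := by
      intro h
      exact kill2 hn H htough u w0 (Ne.symm hw0ne) j0 j1 hj01
        (nbr_subset2 hN0' (Or.inl rfl) (Or.inr rfl))
        (nbr_subset2 hN1' (Or.inl rfl) (Or.inr h.symm))
    have hwne02 : w0 ≠ w2 := by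
      intro h
      exact kill2 hn H htough u w0 (Ne.symm hw0ne) j0 j2 hj02
        (nbr_subset2 hN0' (Or.inl rfl) (Or.inr rfl))
        (nbr_subset2 hN2' (Or.inl rfl) (Or.inr h.symm))
    have hwne12 : w1 ≠ w2 := by
      intro h
      exact kill2 hn H htough u w1 (Ne.symm hw1ne) j1 j2 hj12
        (nbr_subset2 hN1' (Or.inl rfl) (Or.inr rfl))
        (nbr_subset2 hN2' (Or.inl rfl) (Or.inr h.symm))
    have hNsel : ∀ (j : Fin n) (hj : (j : ℕ) < 3),
        H.neighborSet (Sum.inr j) = {Sum.inl u, Sum.inl (sel3 w0 w1 w2 ⟨(j : ℕ), hj⟩)} := by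
      intro j hj
      have hj3 : (j:ℕ) = 0 ∨ (j:ℕ) = 1 ∨ (j:ℕ) = 2 := by omega
      rcases hj3 with h|h|h
      · rw [show sel3 w0 w1 w2 ⟨(j:ℕ), hj⟩ = w0 from by simp [sel3, h],
          show (Sum.inr j : Fin n ⊕ Fin n) = Sum.inr j0 from by
            apply congrArg; apply Fin.ext; simpa using h]
        exact hN0'
      · rw [show sel3 w0 w1 w2 ⟨(j:ℕ), hj⟩ = w1 from by simp [sel3, h],
          show (Sum.inr j : Fin n ⊕ Fin n) = Sum.inr j1 from by
            apply congrArg; apply Fin.ext; simpa using h]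
        exact hN1'
      · rw [show sel3 w0 w1 w2 ⟨(j:ℕ), hj⟩ = w2 from by simp [sel3, h],
          show (Sum.inr j : Fin n ⊕ Fin n) = Sum.inr j2 from by
            apply congrArg; apply Fin.ext; simpa using h]
        exact hN2'
    constructor
    · refine ⟨u, sel3 w0 w1 w2, sel3_injective hwne01 hwne02 hwne12, ?_, hNsel⟩
      intro k
      rcases k with ⟨kv, hkv⟩
      interval_cases kv <;> simpa [sel3] using (by assumption)
    · -- the isomorphism with Gnn
      obtain ⟨e, he⟩ := exists_perm_extend (show 4 ≤ n by omega)
        (fun i : Fin 4 => if i.val = 0 then u else if i.val = 1 then w0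
          else if i.val = 2 then w1 else w2)
        (by
          intro a b h
          rcases a with ⟨av, hav⟩; rcases b with ⟨bv, hbv⟩
          apply Fin.ext
          have hu0' : u ≠ w0 := Ne.symm hw0ne
          have hu1' : u ≠ w1 := Ne.symm hw1ne
          have hu2' : u ≠ w2 := Ne.symm hw2ne
          interval_cases av <;> interval_cases bv <;> simp_all)
      have heu : e ⟨0, by omega⟩ = u := by simpa using he ⟨0, by norm_num⟩
      have hew0 : e ⟨1, by omega⟩ = w0 := by simpa using he ⟨1, by norm_num⟩
      have hew1 : e ⟨2, by omega⟩ = w1 := by simpa using he ⟨2, by norm_num⟩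
      have hew2 : e ⟨3, by omega⟩ = w2 := by simpa using he ⟨3, by norm_num⟩
      have hval : ∀ (i : Fin n) (k : ℕ) (hk : k < n),
          (((e.symm i : Fin n)) : ℕ) = k ↔ i = e ⟨k, hk⟩ := by
        intro i k hk
        constructor
        · intro h
          have h2 : e.symm i = ⟨k, hk⟩ := Fin.ext h
          rw [← h2, Equiv.apply_symm_apply]
        · intro h
          rw [h, Equiv.symm_apply_apply]
      have hkey : ∀ (i j : Fin n),
          (Gnn n).Adj (Sum.inl (e.symm i)) (Sum.inr j) ↔ H.Adj (Sum.inl i) (Sum.inr j) := by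
        intro i j
        rw [gnn_adj_lr]
        by_cases hj3 : (j:ℕ) < 3
        · have hj012 : (j:ℕ) = 0 ∨ (j:ℕ) = 1 ∨ (j:ℕ) = 2 := by omega
          rcases hj012 with h|h|h
          · rw [show (Sum.inr j : Fin n ⊕ Fin n) = Sum.inr j0 from by
              apply congrArg; apply Fin.ext; simpa using h]
            constructor
            · rintro (h3 | ⟨_, h0 | h1⟩)
              · omega
              · exact hadjmem j0 i u w0 hN0' (Or.inl ((hval i 0 (by omega)).mp h0 |>.trans heu))
              · refine hadjmem j0 i u w0 hN0' (Or.inr ?_)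
                exact ((hval i 1 (by omega)).mp (by omega) |>.trans hew0)
            · intro hadj
              rcases hmemadj j0 i u w0 hN0' hadj with h' | h'
              · exact Or.inr ⟨by omega, Or.inl ((hval i 0 (by omega)).mpr (h'.trans heu.symm))⟩
              · exact Or.inr ⟨by omega, Or.inr (by
                  have := (hval i 1 (by omega)).mpr (h'.trans hew0.symm)
                  omega)⟩
          · rw [show (Sum.inr j : Fin n ⊕ Fin n) = Sum.inr j1 from by
              apply congrArg; apply Fin.ext; simpa using h]
            constructor
            · rintro (h3 | ⟨_, h0 | h1⟩)
              · omega
              · exact hadjmem j1 i u w1 hN1' (Or.inl ((hval i 0 (by omega)).mp h0 |>.trans heu))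
              · refine hadjmem j1 i u w1 hN1' (Or.inr ?_)
                exact ((hval i 2 (by omega)).mp (by omega) |>.trans hew1)
            · intro hadj
              rcases hmemadj j1 i u w1 hN1' hadj with h' | h'
              · exact Or.inr ⟨by omega, Or.inl ((hval i 0 (by omega)).mpr (h'.trans heu.symm))⟩
              · exact Or.inr ⟨by omega, Or.inr (by
                  have := (hval i 2 (by omega)).mpr (h'.trans hew1.symm)
                  omega)⟩
          · rw [show (Sum.inr j : Fin n ⊕ Fin n) = Sum.inr j2 from by
              apply congrArg; apply Fin.ext; simpa using h]
            constructor
            · rintro (h3 | ⟨_, h0 | h1⟩)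
              · omega
              · exact hadjmem j2 i u w2 hN2' (Or.inl ((hval i 0 (by omega)).mp h0 |>.trans heu))
              · refine hadjmem j2 i u w2 hN2' (Or.inr ?_)
                exact ((hval i 3 (by omega)).mp (by omega) |>.trans hew2)
            · intro hadj
              rcases hmemadj j2 i u w2 hN2' hadj with h' | h'
              · exact Or.inr ⟨by omega, Or.inl ((hval i 0 (by omega)).mpr (h'.trans heu.symm))⟩
              · exact Or.inr ⟨by omega, Or.inr (by
                  have := (hval i 3 (by omega)).mpr (h'.trans hew2.symm)
                  omega)⟩
        · constructor
          · intro _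
            exact hcomp i j (by omega)
          · intro _
            left
            omega
      refine ⟨⟨Equiv.sumCongr e.symm (Equiv.refl (Fin n)), @fun aa bb => ?_⟩⟩
      rcases aa with i | jj <;> rcases bb with i' | jj' <;>
        simp only [Equiv.sumCongr_apply, Sum.map_inl, Sum.map_inr, Equiv.refl_apply]
      · exact iff_of_false (gnn_adj_ll _ _) (hnoXX i i')
      · exact hkey i jj'
      · rw [(Gnn n).adj_comm, H.adj_comm]
        exact hkey i' jj
      · exact iff_of_false (gnn_adj_rr _ _) (hnoYY jj jj')
  · -- no common neighbour: H is Hamiltonian, contradiction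
    exfalso
    apply hham
    have hno : ∀ s : Fin n, (s = a0 ∨ s = b0) → (s = a1 ∨ s = b1) → (s = a2 ∨ s = b2) → False :=
      fun s h0 h1 h2 => hcc ⟨s, h0, h1, h2⟩
    have hv0 : (j0:ℕ) = 0 := rfl
    have hv1 : (j1:ℕ) = 1 := rfl
    have hv2 : (j2:ℕ) = 2 := rfl
    have had0 : ∀ z, (z = a0 ∨ z = b0) → H.Adj (Sum.inl z) (Sum.inr j0) :=
      fun z h => hadjmem j0 z a0 b0 hN0 h
    have had1 : ∀ z, (z = a1 ∨ z = b1) → H.Adj (Sum.inl z) (Sum.inr j1) :=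
      fun z h => hadjmem j1 z a1 b1 hN1 h
    have had2 : ∀ z, (z = a2 ∨ z = b2) → H.Adj (Sum.inl z) (Sum.inr j2) :=
      fun z h => hadjmem j2 z a2 b2 hN2 h
    have hkpair : ∀ (jA jB aA bA aB bB s t : Fin n), jA ≠ jB →
        H.neighborSet (Sum.inr jA) = {Sum.inl aA, Sum.inl bA} →
        H.neighborSet (Sum.inr jB) = {Sum.inl aB, Sum.inl bB} →
        s ≠ t → (s = aA ∨ s = bA) → (t = aA ∨ t = bA) →
        (s = aB ∨ s = bB) → (t = aB ∨ t = bB) → False := by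
      intro jA jB aA bA aB bB s t hj hNA hNB hst hsA htA hsB htB
      have h1 := mem_flip hst hsA htA
      have h2 := mem_flip hst hsB htB
      exact kill2 hn H htough s t hst jA jB hj
        (nbr_subset2 hNA h1.1 h1.2) (nbr_subset2 hNB h2.1 h2.2)
    by_cases I01 : a0 = a1 ∨ a0 = b1 ∨ b0 = a1 ∨ b0 = b1 <;>
    by_cases I02 : a0 = a2 ∨ a0 = b2 ∨ b0 = a2 ∨ b0 = b2 <;>
    by_cases I12 : a1 = a2 ∨ a1 = b2 ∨ b1 = a2 ∨ b1 = b2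
    · -- TTT : triangle, impossible
      exfalso
      obtain ⟨s, hs0, hs1⟩ := shared_of I01
      obtain ⟨t, ht0, ht2⟩ := shared_of I02
      obtain ⟨r, hr1, hr2⟩ := shared_of I12
      have hst : s ≠ t := fun h => hno s hs0 hs1 (h ▸ ht2)
      have hsr : s ≠ r := fun h => hno s hs0 hs1 (h ▸ hr2)
      have htr : t ≠ r := fun h => hno t ht0 (h ▸ hr1) ht2
      have h0 := mem_flip hst hs0 ht0
      have h1 := mem_flip hsr hs1 hr1
      have h2 := mem_flip htr ht2 hr2
      exact kill3 hn H htough s t r hst hsr htr j0 j1 j2 hj01 hj02 hj12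
        (nbr_subset3 hN0 (h0.1.imp id Or.inl) (h0.2.imp id Or.inl))
        (nbr_subset3 hN1 (h1.1.imp id Or.inr) (h1.2.imp id Or.inr))
        (nbr_subset3 hN2 (Or.inr h2.1) (Or.inr h2.2))
    · -- TTF : e0 is the middle edge
      obtain ⟨s, hs0, hs1⟩ := shared_of I01
      obtain ⟨t, ht0, ht2⟩ := shared_of I02
      have hst : s ≠ t := fun h => hno s hs0 hs1 (h ▸ ht2)
      obtain ⟨xx, hxxm, hxxs⟩ := other_end hab1 hs1
      obtain ⟨yy, hyym, hyyt⟩ := other_end hab2 ht2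
      have hxt : xx ≠ t := disj_ne I12 hxxm ht2
      have hxy : xx ≠ yy := disj_ne I12 hxxm hyym
      have hsy : s ≠ yy := disj_ne I12 hs1 hyym
      obtain ⟨z, hz1, hz2, hz3, hz4, _⟩ := fresh5 hn xx s t yy yy
      obtain ⟨z', hz1', hz2', hz3', hz4', hz5'⟩ := fresh5 hn xx s t yy z
      exact hamC hn H hcomp j1 j0 j2 (by omega) (by omega) (by omega)
        hj01.symm hj12 hj02
        xx s t yy z z'
        (sel6_injective hxxs hxt hxy (Ne.symm hz1) (Ne.symm hz1')
          hst hsy (Ne.symm hz2) (Ne.symm hz2')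
          (Ne.symm hyyt) (Ne.symm hz3) (Ne.symm hz3')
          (Ne.symm hz4) (Ne.symm hz4') (Ne.symm hz5'))
        (had1 xx hxxm) (had1 s hs1) (had0 s hs0) (had0 t ht0) (had2 t ht2) (had2 yy hyym)
    · -- TFT : e1 is the middle edge
      obtain ⟨s, hs0, hs1⟩ := shared_of I01
      obtain ⟨t, ht1, ht2⟩ := shared_of I12
      have hst : s ≠ t := fun h => hno s hs0 hs1 (h ▸ ht2)
      obtain ⟨xx, hxxm, hxxs⟩ := other_end hab0 hs0
      obtain ⟨yy, hyym, hyyt⟩ := other_end hab2 ht2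
      have hxt : xx ≠ t := disj_ne I02 hxxm ht2
      have hxy : xx ≠ yy := disj_ne I02 hxxm hyym
      have hsy : s ≠ yy := disj_ne I02 hs0 hyym
      obtain ⟨z, hz1, hz2, hz3, hz4, _⟩ := fresh5 hn xx s t yy yy
      obtain ⟨z', hz1', hz2', hz3', hz4', hz5'⟩ := fresh5 hn xx s t yy z
      exact hamC hn H hcomp j0 j1 j2 (by omega) (by omega) (by omega)
        hj01 hj02 hj12
        xx s t yy z z'
        (sel6_injective hxxs hxt hxy (Ne.symm hz1) (Ne.symm hz1')
          hst hsy (Ne.symm hz2) (Ne.symm hz2')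
          (Ne.symm hyyt) (Ne.symm hz3) (Ne.symm hz3')
          (Ne.symm hz4) (Ne.symm hz4') (Ne.symm hz5'))
        (had0 xx hxxm) (had0 s hs0) (had1 s hs1) (had1 t ht1) (had2 t ht2) (had2 yy hyym)
    · -- TFF : only e0,e1 intersect
      obtain ⟨s, hs0, hs1⟩ := shared_of I01
      obtain ⟨xx, hxxm, hxxs⟩ := other_end hab0 hs0
      obtain ⟨yy, hyym, hyys⟩ := other_end hab1 hs1
      have hxy : xx ≠ yy := by
        intro h
        exact hkpair j0 j1 a0 b0 a1 b1 s xx hj01 hN0 hN1 (Ne.symm hxxs) hs0 hxxm hs1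
          (h ▸ hyym)
      have hxa2 : xx ≠ a2 := disj_ne I02 hxxm (Or.inl rfl)
      have hxb2 : xx ≠ b2 := disj_ne I02 hxxm (Or.inr rfl)
      have hsa2 : s ≠ a2 := disj_ne I02 hs0 (Or.inl rfl)
      have hsb2 : s ≠ b2 := disj_ne I02 hs0 (Or.inr rfl)
      have hya2 : yy ≠ a2 := disj_ne I12 hyym (Or.inl rfl)
      have hyb2 : yy ≠ b2 := disj_ne I12 hyym (Or.inr rfl)
      obtain ⟨z, hz1, hz2, hz3, hz4, hz5⟩ := fresh5 hn xx s yy a2 b2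
      exact hamB hn H hcomp j0 j1 j2 (by omega) (by omega) (by omega)
        hj01 hj02 hj12
        xx s yy a2 b2 z
        (sel6_injective hxxs hxy hxa2 hxb2 (Ne.symm hz1)
          (Ne.symm hyys) hsa2 hsb2 (Ne.symm hz2)
          hya2 hyb2 (Ne.symm hz3)
          hab2 (Ne.symm hz4) (Ne.symm hz5))
        (had0 xx hxxm) (had0 s hs0) (had1 s hs1) (had1 yy hyym)
        (had2 a2 (Or.inl rfl)) (had2 b2 (Or.inr rfl))
    ·
      obtain ⟨s, hs0, hs2⟩ := shared_of I02
      obtain ⟨t, ht1, ht2⟩ := shared_of I12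
      have hst : s ≠ t := fun h => hno s hs0 (h ▸ ht1) hs2
      obtain ⟨xx, hxxm, hxxs⟩ := other_end hab0 hs0
      obtain ⟨yy, hyym, hyyt⟩ := other_end hab1 ht1
      have hxt : xx ≠ t := disj_ne I01 hxxm ht1
      have hxy : xx ≠ yy := disj_ne I01 hxxm hyym
      have hsy : s ≠ yy := disj_ne I01 hs0 hyym
      obtain ⟨z, hz1, hz2, hz3, hz4, _⟩ := fresh5 hn xx s t yy yy
      obtain ⟨z', hz1', hz2', hz3', hz4', hz5'⟩ := fresh5 hn xx s t yy z
      exact hamC hn H hcomp j0 j2 j1 (by omega) (by omega) (by omega)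
        hj02 hj01 hj12.symm
        xx s t yy z z'
        (sel6_injective hxxs hxt hxy (Ne.symm hz1) (Ne.symm hz1')
          hst hsy (Ne.symm hz2) (Ne.symm hz2')
          (Ne.symm hyyt) (Ne.symm hz3) (Ne.symm hz3')
          (Ne.symm hz4) (Ne.symm hz4') (Ne.symm hz5'))
        (had0 xx hxxm) (had0 s hs0) (had2 s hs2) (had2 t ht2) (had1 t ht1) (had1 yy hyym)
    · -- FTF : only e0,e2 intersect
      obtain ⟨s, hs0, hs2⟩ := shared_of I02
      obtain ⟨xx, hxxm, hxxs⟩ := other_end hab0 hs0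
      obtain ⟨yy, hyym, hyys⟩ := other_end hab2 hs2
      have hxy : xx ≠ yy := by
        intro h
        exact hkpair j0 j2 a0 b0 a2 b2 s xx hj02 hN0 hN2 (Ne.symm hxxs) hs0 hxxm hs2
          (h ▸ hyym)
      have hxa1 : xx ≠ a1 := disj_ne I01 hxxm (Or.inl rfl)
      have hxb1 : xx ≠ b1 := disj_ne I01 hxxm (Or.inr rfl)
      have hsa1 : s ≠ a1 := disj_ne I01 hs0 (Or.inl rfl)
      have hsb1 : s ≠ b1 := disj_ne I01 hs0 (Or.inr rfl)
      have hya1 : yy ≠ a1 := fun h => disj_ne I12 (Or.inl rfl : a1 = a1 ∨ a1 = b1) hyym h.symm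
      have hyb1 : yy ≠ b1 := fun h => disj_ne I12 (Or.inr rfl : b1 = a1 ∨ b1 = b1) hyym h.symm
      obtain ⟨z, hz1, hz2, hz3, hz4, hz5⟩ := fresh5 hn xx s yy a1 b1
      exact hamB hn H hcomp j0 j2 j1 (by omega) (by omega) (by omega)
        hj02 hj01 hj12.symm
        xx s yy a1 b1 z
        (sel6_injective hxxs hxy hxa1 hxb1 (Ne.symm hz1)
          (Ne.symm hyys) hsa1 hsb1 (Ne.symm hz2)
          hya1 hyb1 (Ne.symm hz3)
          hab1 (Ne.symm hz4) (Ne.symm hz5))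
        (had0 xx hxxm) (had0 s hs0) (had2 s hs2) (had2 yy hyym)
        (had1 a1 (Or.inl rfl)) (had1 b1 (Or.inr rfl))
    · -- FFT : only e1,e2 intersect
      obtain ⟨s, hs1, hs2⟩ := shared_of I12
      obtain ⟨xx, hxxm, hxxs⟩ := other_end hab1 hs1
      obtain ⟨yy, hyym, hyys⟩ := other_end hab2 hs2
      have hxy : xx ≠ yy := by
        intro h
        exact hkpair j1 j2 a1 b1 a2 b2 s xx hj12 hN1 hN2 (Ne.symm hxxs) hs1 hxxm hs2
          (h ▸ hyym)
      have hxa0 : xx ≠ a0 := fun h => disj_ne I01 (Or.inl rfl : a0 = a0 ∨ a0 = b0) hxxm h.symm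
      have hxb0 : xx ≠ b0 := fun h => disj_ne I01 (Or.inr rfl : b0 = a0 ∨ b0 = b0) hxxm h.symm
      have hsa0 : s ≠ a0 := fun h => disj_ne I01 (Or.inl rfl : a0 = a0 ∨ a0 = b0) hs1 h.symm
      have hsb0 : s ≠ b0 := fun h => disj_ne I01 (Or.inr rfl : b0 = a0 ∨ b0 = b0) hs1 h.symm
      have hya0 : yy ≠ a0 := fun h => disj_ne I02 (Or.inl rfl : a0 = a0 ∨ a0 = b0) hyym h.symm
      have hyb0 : yy ≠ b0 := fun h => disj_ne I02 (Or.inr rfl : b0 = a0 ∨ b0 = b0) hyym h.symm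
      obtain ⟨z, hz1, hz2, hz3, hz4, hz5⟩ := fresh5 hn xx s yy a0 b0
      exact hamB hn H hcomp j1 j2 j0 (by omega) (by omega) (by omega)
        hj12 hj01.symm hj02.symm
        xx s yy a0 b0 z
        (sel6_injective hxxs hxy hxa0 hxb0 (Ne.symm hz1)
          (Ne.symm hyys) hsa0 hsb0 (Ne.symm hz2)
          hya0 hyb0 (Ne.symm hz3)
          hab0 (Ne.symm hz4) (Ne.symm hz5))
        (had1 xx hxxm) (had1 s hs1) (had2 s hs2) (had2 yy hyym)
        (had0 a0 (Or.inl rfl)) (had0 b0 (Or.inr rfl))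
    · -- FFF : three disjoint edges
      have d01aa : a0 ≠ a1 := disj_ne I01 (Or.inl rfl) (Or.inl rfl)
      have d01ab : a0 ≠ b1 := disj_ne I01 (Or.inl rfl) (Or.inr rfl)
      have d01ba : b0 ≠ a1 := disj_ne I01 (Or.inr rfl) (Or.inl rfl)
      have d01bb : b0 ≠ b1 := disj_ne I01 (Or.inr rfl) (Or.inr rfl)
      have d02aa : a0 ≠ a2 := disj_ne I02 (Or.inl rfl) (Or.inl rfl)
      have d02ab : a0 ≠ b2 := disj_ne I02 (Or.inl rfl) (Or.inr rfl)
      have d02ba : b0 ≠ a2 := disj_ne I02 (Or.inr rfl) (Or.inl rfl)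
      have d02bb : b0 ≠ b2 := disj_ne I02 (Or.inr rfl) (Or.inr rfl)
      have d12aa : a1 ≠ a2 := disj_ne I12 (Or.inl rfl) (Or.inl rfl)
      have d12ab : a1 ≠ b2 := disj_ne I12 (Or.inl rfl) (Or.inr rfl)
      have d12ba : b1 ≠ a2 := disj_ne I12 (Or.inr rfl) (Or.inl rfl)
      have d12bb : b1 ≠ b2 := disj_ne I12 (Or.inr rfl) (Or.inr rfl)
      exact hamA hn H hcomp j0 j1 j2 (by omega) (by omega) (by omega)
        hj01 hj02 hj12
        a0 b0 a1 b1 a2 b2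
        (sel6_injective hab0 d01aa d01ab d02aa d02ab
          d01ba d01bb d02ba d02bb
          hab1 d12aa d12ab
          d12ba d12bb
          hab2)
        (had0 a0 (Or.inl rfl)) (had0 b0 (Or.inr rfl))
        (had1 a1 (Or.inl rfl)) (had1 b1 (Or.inr rfl))
        (had2 a2 (Or.inl rfl)) (had2 b2 (Or.inr rfl))
end
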